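/- arXiv:2207.06708 — 5 statements merged into one kernel-verified Lean document; each statement's English description precedes it below -/
import Mathlib

section
/- Let V^b be a finite set of variables with n = |V^b| ≥ 1. For every mapping m : V^b → ℤ, the associated gap function gp satisfies 0 ≤ gp(x) ≤ (n−1)² for every x ∈ V^b. Consequently, the set of all gap functions associated with mappings V^b → ℤ is finite (of cardinality at most ((n−1)² + 1)^n). -/
/-- `gp` is the gap function (with ceiling `c`) associated with the mapping `m` on the
finite variable set `V`: there is an enumeration of `V` sorted by `m`-values such that
`gp` of the first variable is `0` and `gp (x_{l+1}) = gp (x_l) + min (m x_{l+1} - m x_l) c`. -/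
def IsGapFunctionC {V : Type} [Fintype V] (c : ℕ) (m : V → ℤ) (gp : V → ℕ) : Prop :=
  ∃ l : List V,
    l.Nodup ∧ (∀ x : V, x ∈ l) ∧
    l.Pairwise (fun a b => m a ≤ m b) ∧
    (∀ h : 0 < l.length, gp (l.get ⟨0, h⟩) = 0) ∧
    (∀ (i : ℕ) (h : i + 1 < l.length),
      gp (l.get ⟨i + 1, h⟩) =
        gp (l.get ⟨i, Nat.lt_of_succ_lt h⟩) +
          min (m (l.get ⟨i + 1, h⟩) - m (l.get ⟨i, Nat.lt_of_succ_lt h⟩)).toNat c)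

theorem gp_bound {V : Type} [Fintype V] {c : ℕ} {m : V → ℤ} {gp : V → ℕ}
    (h : IsGapFunctionC c m gp) (x : V) : gp x ≤ (Fintype.card V - 1) * c := by
  classical
  obtain ⟨l, hnd, hmem, _, h0, hstep⟩ := h
  have hlen : l.length = Fintype.card V := by
    rw [← List.toFinset_card_of_nodup hnd]
    congr 1
    apply Finset.eq_univ_iff_forall.mpr
    intro y; simp [hmem y]
  have key : ∀ (i : ℕ) (h : i < l.length), gp (l.get ⟨i, h⟩) ≤ i * c := by
    intro i
    induction i with
    | zero => intro h; simpa using h0 h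
    | succ k ih =>
      intro h
      rw [hstep k h]
      have h1 := ih (Nat.lt_of_succ_lt h)
      have h2 : (m (l.get ⟨k + 1, h⟩) - m (l.get ⟨k, Nat.lt_of_succ_lt h⟩)).toNat ⊓ c ≤ c :=
        min_le_right _ _
      calc _ ≤ k * c + c := Nat.add_le_add h1 h2
      _ = (k + 1) * c := by ring
  obtain ⟨i, hx⟩ := List.get_of_mem (hmem x)
  have hi : (i : ℕ) ≤ Fintype.card V - 1 := by omega
  calc gp x = gp (l.get i) := by rw [hx]
  _ ≤ (i : ℕ) * c := key i i.isLt
  _ ≤ (Fintype.card V - 1) * c := Nat.mul_le_mul_right c hi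

/-- For a finite set `V` of variables with `n = |V| ≥ 1`, every gap function
`gp` associated with a mapping `m : V → ℤ` satisfies `0 ≤ gp x ≤ (n-1)²` for every `x`;
consequently the set of all gap functions is finite, of cardinality at most `((n-1)²+1)^n`. -/
theorem stmt0 {V : Type} [Fintype V] (hn : 1 ≤ Fintype.card V) :
    (∀ (m : V → ℤ) (gp : V → ℕ), IsGapFunctionC (Fintype.card V - 1) m gp →
      ∀ x : V, 0 ≤ gp x ∧ gp x ≤ (Fintype.card V - 1) ^ 2) ∧
    {gp : V → ℕ | ∃ m : V → ℤ, IsGapFunctionC (Fintype.card V - 1) m gp}.Finite ∧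
    {gp : V → ℕ | ∃ m : V → ℤ, IsGapFunctionC (Fintype.card V - 1) m gp}.ncard ≤
      ((Fintype.card V - 1) ^ 2 + 1) ^ Fintype.card V := by
  have hb : ∀ (m : V → ℤ) (gp : V → ℕ), IsGapFunctionC (Fintype.card V - 1) m gp →
      ∀ x : V, 0 ≤ gp x ∧ gp x ≤ (Fintype.card V - 1) ^ 2 := by
    intro m gp h x
    refine ⟨Nat.zero_le _, ?_⟩
    have := gp_bound h x
    calc gp x ≤ (Fintype.card V - 1) * (Fintype.card V - 1) := this
    _ = (Fintype.card V - 1) ^ 2 := (sq _).symm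
  classical
  set B := (Fintype.card V - 1) ^ 2 with hB
  set S := {gp : V → ℕ | ∃ m : V → ℤ, IsGapFunctionC (Fintype.card V - 1) m gp} with hS
  have hsub : S ⊆ ↑(Fintype.piFinset (fun _ : V => Finset.range (B + 1))) := by
    intro gp ⟨m, hgp⟩
    simp only [Finset.mem_coe, Fintype.mem_piFinset, Finset.mem_range]
    intro x
    exact Nat.lt_succ_of_le (hb m gp hgp x).2
  have hfin : S.Finite := Set.Finite.subset (Finset.finite_toSet _) hsub
  refine ⟨hb, hfin, ?_⟩
  calc S.ncard ≤ (↑(Fintype.piFinset (fun _ : V => Finset.range (B + 1))) : Set (V → ℕ)).ncard :=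
        Set.ncard_le_ncard hsub (Finset.finite_toSet _)
  _ = (Fintype.piFinset (fun _ : V => Finset.range (B + 1))).card := Set.ncard_coe_finset _
  _ = (B + 1) ^ Fintype.card V := by simp
end

section
/- Let V^b be a finite set of variables and m : V^b → ℤ a mapping with associated gap function gp. Then for all x, y ∈ V^b: m(x) ≤ m(y) if and only if gp(x) ≤ gp(y); in particular m(x) = m(y) iff gp(x) = gp(y), and m(x) < m(y) iff gp(x) < gp(y). (In particular gp is well defined, independent of the chosen sorted enumeration of V^b.) -/
theorem gap_aux {V : Type} [Fintype V] (m : V → ℤ) (gp : V → ℕ)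
    (h : IsGapFunctionC (Fintype.card V - 1) m gp) :
    ∀ x y : V, m x ≤ m y ↔ gp x ≤ gp y := by
  obtain ⟨l, hnd, hmem, hsort, h0, hstep⟩ := h
  have hsorted : ∀ (i j : ℕ) (hi : i < l.length) (hj : j < l.length), i ≤ j →
      m (l.get ⟨i, hi⟩) ≤ m (l.get ⟨j, hj⟩) := by
    intro i j hi hj hij
    rcases eq_or_lt_of_le hij with rfl | hlt
    · exact le_refl _
    · exact List.pairwise_iff_get.mp hsort ⟨i, hi⟩ ⟨j, hj⟩ hlt
  have hmono : ∀ (k i : ℕ) (hk : i + k < l.length),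
      gp (l.get ⟨i, by omega⟩) ≤ gp (l.get ⟨i + k, hk⟩) := by
    intro k
    induction k with
    | zero => intro i hk; exact le_refl _
    | succ k ih =>
      intro i hk
      have h1 : i + k < l.length := by omega
      have h2 : i + k + 1 < l.length := by omega
      calc gp (l.get ⟨i, by omega⟩) ≤ gp (l.get ⟨i + k, h1⟩) := ih i h1
        _ ≤ gp (l.get ⟨i + k + 1, h2⟩) := by rw [hstep (i + k) h2]; exact Nat.le_add_right _ _
        _ = gp (l.get ⟨i + (k + 1), hk⟩) := by congr 1
  have heq : ∀ (k i : ℕ) (hk : i + k < l.length),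
      m (l.get ⟨i, by omega⟩) = m (l.get ⟨i + k, hk⟩) →
      gp (l.get ⟨i, by omega⟩) = gp (l.get ⟨i + k, hk⟩) := by
    intro k
    induction k with
    | zero => intro i hk _; rfl
    | succ k ih =>
      intro i hk hm
      have h1 : i + k < l.length := by omega
      have h2 : i + k + 1 < l.length := by omega
      have e2 : l.get ⟨i + (k+1), hk⟩ = l.get ⟨i + k + 1, h2⟩ := by congr 1
      rw [e2] at hm ⊢
      have ha : m (l.get ⟨i, by omega⟩) ≤ m (l.get ⟨i + k, h1⟩) := hsorted _ _ _ _ (by omega)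
      have hb : m (l.get ⟨i + k, h1⟩) ≤ m (l.get ⟨i + k + 1, h2⟩) := hsorted _ _ _ _ (by omega)
      have hm1 : m (l.get ⟨i, by omega⟩) = m (l.get ⟨i + k, h1⟩) := by omega
      have hm2 : m (l.get ⟨i + k, h1⟩) = m (l.get ⟨i + k + 1, h2⟩) := by omega
      rw [hstep (i + k) h2, ← hm2]
      simp
      exact ih i h1 hm1
  have hlt : ∀ (k i : ℕ) (hk : i + k < l.length),
      m (l.get ⟨i, by omega⟩) < m (l.get ⟨i + k, hk⟩) →
      gp (l.get ⟨i, by omega⟩) < gp (l.get ⟨i + k, hk⟩) := by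
    intro k
    induction k with
    | zero => intro i hk hm; exact absurd hm (lt_irrefl _)
    | succ k ih =>
      intro i hk hm
      have h1 : i + k < l.length := by omega
      have h2 : i + k + 1 < l.length := by omega
      have e2 : l.get ⟨i + (k+1), hk⟩ = l.get ⟨i + k + 1, h2⟩ := by congr 1
      rw [e2] at hm ⊢
      have hb : m (l.get ⟨i + k, h1⟩) ≤ m (l.get ⟨i + k + 1, h2⟩) := hsorted _ _ _ _ (by omega)
      rcases eq_or_lt_of_le hb with he | hs
      · have : m (l.get ⟨i, by omega⟩) < m (l.get ⟨i + k, h1⟩) := by omega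
        have := ih i h1 this
        calc gp (l.get ⟨i, by omega⟩) < gp (l.get ⟨i + k, h1⟩) := this
          _ ≤ gp (l.get ⟨i + k + 1, h2⟩) := by rw [hstep (i + k) h2]; exact Nat.le_add_right _ _
      · -- strict last step
        have hne : l.get ⟨i + k, h1⟩ ≠ l.get ⟨i + k + 1, h2⟩ := by
          intro he; rw [he] at hs; exact lt_irrefl _ hs
        have hcard : 2 ≤ Fintype.card V :=
          Fintype.one_lt_card_iff_nontrivial.mpr ⟨_, _, hne⟩
        have hd : 1 ≤ (m (l.get ⟨i + k + 1, h2⟩) - m (l.get ⟨i + k, h1⟩)).toNat := by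
          omega
        have hc : 1 ≤ Fintype.card V - 1 := by omega
        have hpos : 1 ≤ min (m (l.get ⟨i + k + 1, h2⟩) - m (l.get ⟨i + k, h1⟩)).toNat
            (Fintype.card V - 1) := le_min hd hc
        calc gp (l.get ⟨i, by omega⟩) ≤ gp (l.get ⟨i + k, h1⟩) := hmono k i h1
          _ < gp (l.get ⟨i + k + 1, h2⟩) := by rw [hstep (i + k) h2]; omega
  -- main
  intro x y
  obtain ⟨ix, hx⟩ := List.mem_iff_get.mp (hmem x)
  obtain ⟨iy, hy⟩ := List.mem_iff_get.mp (hmem y)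
  subst hx; subst hy
  have key : ∀ (a b : Fin l.length), m (l.get a) ≤ m (l.get b) → gp (l.get a) ≤ gp (l.get b) := by
    intro a b hab
    rcases le_or_gt a.1 b.1 with hle | hgt
    · obtain ⟨k, hk⟩ : ∃ k, b.1 = a.1 + k := ⟨b.1 - a.1, by omega⟩
      have hbl : a.1 + k < l.length := hk ▸ b.2
      have eb : l.get b = l.get ⟨a.1 + k, hbl⟩ := by congr 1; exact Fin.ext hk
      rw [eb] at hab ⊢
      rcases eq_or_lt_of_le hab with he | hs
      · exact le_of_eq (heq k a.1 hbl he)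
      · exact le_of_lt (hlt k a.1 hbl hs)
    · -- b.1 < a.1, sorted gives m b ≤ m a, hence m a = m b
      have : m (l.get b) ≤ m (l.get a) := hsorted b.1 a.1 b.2 a.2 (le_of_lt hgt)
      have heq' : m (l.get b) = m (l.get a) := le_antisymm this hab
      obtain ⟨k, hk⟩ : ∃ k, a.1 = b.1 + k := ⟨a.1 - b.1, by omega⟩
      have hal : b.1 + k < l.length := hk ▸ a.2
      have ea : l.get a = l.get ⟨b.1 + k, hal⟩ := by congr 1; exact Fin.ext hk
      rw [ea] at heq' ⊢
      exact le_of_eq (heq k b.1 hal heq').symm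
  constructor
  · exact key ix iy
  · intro hg
    by_contra hnm
    push_neg at hnm
    -- m y < m x
    rcases le_or_gt ix.1 iy.1 with hle | hgt
    · exact absurd (hsorted ix.1 iy.1 ix.2 iy.2 hle) (not_le.mpr hnm)
    · obtain ⟨k, hk⟩ : ∃ k, ix.1 = iy.1 + k := ⟨ix.1 - iy.1, by omega⟩
      have hal : iy.1 + k < l.length := hk ▸ ix.2
      have ea : l.get ix = l.get ⟨iy.1 + k, hal⟩ := by congr 1; exact Fin.ext hk
      rw [ea] at hnm hg
      exact absurd hg (not_le.mpr (hlt k iy.1 hal hnm))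

/-- For a mapping `m : V → ℤ` on a finite set of variables with associated gap
function `gp`: `m x ≤ m y ↔ gp x ≤ gp y`, `m x = m y ↔ gp x = gp y`, `m x < m y ↔ gp x < gp y`;
in particular the gap function is well defined (any two gap functions associated with `m`,
i.e. computed from any sorted enumerations, coincide). -/
theorem stmt1 {V : Type} [Fintype V] (m : V → ℤ) (gp : V → ℕ)
    (h : IsGapFunctionC (Fintype.card V - 1) m gp) :
    (∀ x y : V, m x ≤ m y ↔ gp x ≤ gp y) ∧
    (∀ x y : V, m x = m y ↔ gp x = gp y) ∧
    (∀ x y : V, m x < m y ↔ gp x < gp y) ∧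
    (∀ gp' : V → ℕ, IsGapFunctionC (Fintype.card V - 1) m gp' → gp' = gp) := by
  have key := gap_aux m gp h
  have keq : ∀ x y : V, m x = m y ↔ gp x = gp y := by
    intro x y
    constructor
    · intro he
      exact le_antisymm ((key x y).mp he.le) ((key y x).mp he.ge)
    · intro he
      exact le_antisymm ((key x y).mpr he.le) ((key y x).mpr he.ge)
  refine ⟨key, keq, ?_, ?_⟩
  · intro x y
    rw [lt_iff_le_not_ge, lt_iff_le_not_ge, key x y, key y x]
  · intro gp' h'
    have key' := gap_aux m gp' h'
    have keq' : ∀ x y : V, m x = m y → gp' x = gp' y := by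
      intro x y he
      exact le_antisymm ((key' x y).mp he.le) ((key' y x).mp he.ge)
    obtain ⟨l, hnd, hmem, hsort, h0, hstep⟩ := h
    obtain ⟨l', hnd', hmem', hsort', h0', hstep'⟩ := h'
    have hperm : l.Perm l' := by
      rw [List.perm_ext_iff_of_nodup hnd hnd']
      intro a; simp [hmem a, hmem' a]
    have hlen : l.length = l'.length := hperm.length_eq
    have hmapeq : l.map m = l'.map m := by
      refine List.Perm.eq_of_pairwise' (r := (· ≤ · : ℤ → ℤ → Prop)) ?_ ?_ (hperm.map m)
      · exact List.pairwise_map.mpr hsort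
      · exact List.pairwise_map.mpr hsort'
    have mEq : ∀ (i : ℕ) (hi : i < l.length) (hi' : i < l'.length),
        m (l.get ⟨i, hi⟩) = m (l'.get ⟨i, hi'⟩) := by
      intro i hi hi'
      have : (l.map m)[i]'(by simpa using hi) = (l'.map m)[i]'(by simpa using hi') := by
        simp_rw [hmapeq]
      simpa using this
    have gEq : ∀ (i : ℕ) (hi : i < l.length) (hi' : i < l'.length),
        gp (l.get ⟨i, hi⟩) = gp' (l'.get ⟨i, hi'⟩) := by
      intro i
      induction i with
      | zero => intro hi hi'; rw [h0 hi, h0' hi']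
      | succ i ih =>
        intro hi hi'
        rw [hstep i hi, hstep' i hi', ih (by omega) (by omega),
          mEq i (by omega) (by omega), mEq (i+1) hi hi']
    funext x
    obtain ⟨ix, hx⟩ := List.mem_iff_get.mp (hmem x)
    subst hx
    have hi' : ix.1 < l'.length := by omega
    have h1 : m (l.get ix) = m (l'.get ⟨ix.1, hi'⟩) := mEq ix.1 ix.2 hi'
    calc gp' (l.get ix) = gp' (l'.get ⟨ix.1, hi'⟩) := keq' _ _ h1
      _ = gp (l.get ix) := (gEq ix.1 ix.2 hi').symm
end

section
/- Let φ be a CLTL formula over (ℤ, <, =) of X-length k, let σ be a concrete model, and let ρ = μ(σ) be its associated symbolic model. Then σ, 0 ⊨ φ (concrete semantics) if and only if ρ, k ⊨_s φ (symbolic semantics). -/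
/-- The gap function (with ceiling `c`) associated with a mapping `m` on a finite set of
variables: enumerating the variables as `x_0, x_1, …` sorted by `m`-values, `gp x_0 = 0` and
`gp x_{l+1} = gp x_l + min (m x_{l+1} - m x_l) c`.  Equivalently (closed form used here),
`gp x` is the sum, over the distinct values `v` of `m` below `m x`, of
`min (next value above v - v) c`. -/
noncomputable def gapFun {V : Type} [Fintype V] (c : ℕ) (m : V → ℤ) (x : V) : ℕ :=
  ∑ v ∈ (Finset.univ.image m).filter (fun w => w < m x),
    min ((((Finset.univ.image m).filter (fun w => v < w)).min.untopD v) - v).toNat c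
/-- Data of a frame over look-ahead variables `Va` and future-blind variables `Vb`: a binary
relation on look-ahead terms `X^j y` (encoded as pairs `(j, y) : ℕ × Va`) together with, for
each position offset `j`, a candidate gap function `Vb → ℕ`.  For an `s`-frame only the
indices `j < s` are relevant. -/
abbrev FrameData (Va Vb : Type) := (ℕ × Va → ℕ × Va → Prop) × (ℕ → Vb → ℕ)
/-- The symbolic model `μ(σ)` associated with a concrete model `σ` (for `X`-length `k`):
its `i`-th frame is the `min (i+1) (k+1)`-frame whose pre-order is induced by the valuations
at positions `i - min i k, …, i` (the term `X^j y` denoting the value of `y` at position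
`i - min i k + j`; indices are clamped to the valid range) and whose `j`-th gap function is
the gap function associated with the future-blind part of position `i - min i k + j`. -/
noncomputable def mu {Va Vb : Type} [Fintype Vb] (k : ℕ)
    (σ : ℕ → Va ⊕ Vb → ℤ) : ℕ → FrameData Va Vb :=
  fun i =>
    (fun t1 t2 =>
        σ (i - min i k + min t1.1 (min i k)) (Sum.inl t1.2) ≤
          σ (i - min i k + min t2.1 (min i k)) (Sum.inl t2.2),
     fun j => gapFun (Fintype.card Vb - 1)
        (fun b => σ (i - min i k + min j (min i k)) (Sum.inr b)))
/-- Constraint LTL formulas over look-ahead variables `Va` and future-blind variables `Vb`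
for the constraint system `(D, <, =)`.  Atomic constraints compare two look-ahead terms
`X^i x`, `X^j y` (`x, y ∈ Va`) or two future-blind variables (`∈ Vb`). -/
inductive CLTL (Va Vb : Type) : Type
  | ltL : ℕ → Va → ℕ → Va → CLTL Va Vb
  | eqL : ℕ → Va → ℕ → Va → CLTL Va Vb
  | ltB : Vb → Vb → CLTL Va Vb
  | eqB : Vb → Vb → CLTL Va Vb
  | not : CLTL Va Vb → CLTL Va Vb
  | or : CLTL Va Vb → CLTL Va Vb → CLTL Va Vb
  | next : CLTL Va Vb → CLTL Va Vb
  | untl : CLTL Va Vb → CLTL Va Vb → CLTL Va Vb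

/-- The `X`-length of a CLTL formula: the maximal `i` such that a look-ahead term `X^i y`
occurs in it (a formula "is of `X`-length `k`" iff its `xlen` is at most `k`). -/
def xlen {Va Vb : Type} : CLTL Va Vb → ℕ
  | .ltL i _ j _ => max i j
  | .eqL i _ j _ => max i j
  | .ltB _ _ => 0
  | .eqB _ _ => 0
  | .not φ => xlen φ
  | .or φ ψ => max (xlen φ) (xlen ψ)
  | .next φ => xlen φ
  | .untl φ ψ => max (xlen φ) (xlen ψ)

/-- Concrete semantics of CLTL over a linearly ordered domain `D`:
`csat σ i φ` means `σ, i ⊨ φ`. -/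
def csat {Va Vb D : Type} [LinearOrder D] (σ : ℕ → Va ⊕ Vb → D) :
    ℕ → CLTL Va Vb → Prop
  | i, .ltL i1 x j1 y => σ (i + i1) (Sum.inl x) < σ (i + j1) (Sum.inl y)
  | i, .eqL i1 x j1 y => σ (i + i1) (Sum.inl x) = σ (i + j1) (Sum.inl y)
  | i, .ltB x y => σ i (Sum.inr x) < σ i (Sum.inr y)
  | i, .eqB x y => σ i (Sum.inr x) = σ i (Sum.inr y)
  | i, .not φ => ¬ csat σ i φ
  | i, .or φ ψ => csat σ i φ ∨ csat σ i ψ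
  | i, .next φ => csat σ (i + 1) φ
  | i, .untl φ ψ => ∃ j, i ≤ j ∧ csat σ j ψ ∧ ∀ l, i ≤ l → l < j → csat σ l φ

/-- Symbolic semantics of CLTL on a sequence of frames: `ssat ρ i φ` means `ρ, i ⊨_s φ`.
A look-ahead constraint is checked against the pre-order of the `i`-th frame, a future-blind
constraint against the gap function of the `i`-th frame at offset `0`. -/
def ssat {Va Vb : Type} (ρ : ℕ → FrameData Va Vb) : ℕ → CLTL Va Vb → Prop
  | i, .ltL i1 x j1 y => (ρ i).1 (i1, x) (j1, y) ∧ ¬ (ρ i).1 (j1, y) (i1, x)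
  | i, .eqL i1 x j1 y => (ρ i).1 (i1, x) (j1, y) ∧ (ρ i).1 (j1, y) (i1, x)
  | i, .ltB x y => (ρ i).2 0 x < (ρ i).2 0 y
  | i, .eqB x y => (ρ i).2 0 x = (ρ i).2 0 y
  | i, .not φ => ¬ ssat ρ i φ
  | i, .or φ ψ => ssat ρ i φ ∨ ssat ρ i ψ
  | i, .next φ => ssat ρ (i + 1) φ
  | i, .untl φ ψ => ∃ j, i ≤ j ∧ ssat ρ j ψ ∧ ∀ l, i ≤ l → l < j → ssat ρ l φ

lemma gap_lt {V : Type} [Fintype V] (m : V → ℤ) (x y : V) (h : m x < m y) :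
    gapFun (Fintype.card V - 1) m x < gapFun (Fintype.card V - 1) m y := by
  classical
  have hxy : x ≠ y := fun e => by simp [e] at h
  have hc : 1 ≤ Fintype.card V - 1 := by
    have : 2 ≤ Fintype.card V := Fintype.one_lt_card_iff_nontrivial.mpr ⟨⟨x, y, hxy⟩⟩
    omega
  unfold gapFun
  have hne : (((Finset.univ.image m).filter (fun w => m x < w))).Nonempty := by
    refine ⟨m y, ?_⟩
    simp only [Finset.mem_filter, Finset.mem_image, Finset.mem_univ, true_and]
    exact ⟨⟨y, rfl⟩, h⟩
  apply Finset.sum_lt_sum_of_subset (i := m x)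
  · intro w hw
    simp only [Finset.mem_filter] at hw ⊢
    exact ⟨hw.1, lt_trans hw.2 h⟩
  · simp only [Finset.mem_filter, Finset.mem_image, Finset.mem_univ, true_and]
    exact ⟨⟨x, rfl⟩, h⟩
  · simp
  · have hmin : (((Finset.univ.image m).filter (fun w => m x < w))).min =
        ((((Finset.univ.image m).filter (fun w => m x < w))).min' hne : ℤ) :=
      (Finset.coe_min' hne).symm
    have hmem := Finset.min'_mem _ hne
    simp only [Finset.mem_filter] at hmem
    rw [hmin, WithTop.untopD_coe]
    have h1 : m x < (((Finset.univ.image m).filter (fun w => m x < w))).min' hne := hmem.2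
    have : 1 ≤ ((((Finset.univ.image m).filter (fun w => m x < w))).min' hne - m x).toNat := by
      omega
    omega
  · intro j _ _
    exact Nat.zero_le _

lemma gap_lt_iff {V : Type} [Fintype V] (m : V → ℤ) (x y : V) :
    m x < m y ↔ gapFun (Fintype.card V - 1) m x < gapFun (Fintype.card V - 1) m y := by
  constructor
  · exact gap_lt m x y
  · intro h
    rcases lt_trichotomy (m x) (m y) with h' | h' | h'
    · exact h'
    · exfalso; unfold gapFun at h; rw [h'] at h; exact lt_irrefl _ h
    · exact absurd (gap_lt m y x h') (by omega)

lemma gap_eq_iff {V : Type} [Fintype V] (m : V → ℤ) (x y : V) :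
    m x = m y ↔ gapFun (Fintype.card V - 1) m x = gapFun (Fintype.card V - 1) m y := by
  constructor
  · intro h; unfold gapFun; rw [h]
  · intro h
    rcases lt_trichotomy (m x) (m y) with h' | h' | h'
    · exact absurd (gap_lt m x y h') (by omega)
    · exact h'
    · exact absurd (gap_lt m y x h') (by omega)


lemma stmt7_aux {Va Vb : Type} [Fintype Vb] (k : ℕ) (σ : ℕ → Va ⊕ Vb → ℤ)
    (φ : CLTL Va Vb) :
    xlen φ ≤ k → ∀ i, (csat σ i φ ↔ ssat (mu k σ) (i + k) φ) := by
  have hmin : ∀ i : ℕ, min (i + k) k = k := fun i => Nat.min_eq_right (Nat.le_add_left k i)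
  have hsub : ∀ i : ℕ, i + k - k = i := fun i => by omega
  induction φ with
  | ltL i1 x j1 y =>
    intro hk i
    simp only [xlen, max_le_iff] at hk
    simp only [csat, ssat, mu, hmin, hsub, Nat.min_eq_left hk.1, Nat.min_eq_left hk.2]
    exact lt_iff_le_not_ge
  | eqL i1 x j1 y =>
    intro hk i
    simp only [xlen, max_le_iff] at hk
    simp only [csat, ssat, mu, hmin, hsub, Nat.min_eq_left hk.1, Nat.min_eq_left hk.2]
    exact le_antisymm_iff
  | ltB x y =>
    intro _ i
    simp only [csat, ssat, mu, hmin, hsub, Nat.min_eq_left (Nat.zero_le k), Nat.add_zero]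
    exact gap_lt_iff (fun b => σ i (Sum.inr b)) x y
  | eqB x y =>
    intro _ i
    simp only [csat, ssat, mu, hmin, hsub, Nat.min_eq_left (Nat.zero_le k), Nat.add_zero]
    exact gap_eq_iff (fun b => σ i (Sum.inr b)) x y
  | not φ ih =>
    intro hk i
    simp only [csat, ssat]
    exact not_congr (ih hk i)
  | or φ ψ ihφ ihψ =>
    intro hk i
    simp only [xlen, max_le_iff] at hk
    simp only [csat, ssat]
    exact or_congr (ihφ hk.1 i) (ihψ hk.2 i)
  | next φ ih =>
    intro hk i
    simp only [csat, ssat]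
    have : i + k + 1 = (i + 1) + k := by omega
    rw [this]
    exact ih hk (i + 1)
  | untl φ ψ ihφ ihψ =>
    intro hk i
    simp only [xlen, max_le_iff] at hk
    simp only [csat, ssat]
    constructor
    · rintro ⟨j, hij, hψ, hφ⟩
      refine ⟨j + k, by omega, (ihψ hk.2 j).mp hψ, fun l h1 h2 => ?_⟩
      have hl : l - k + k = l := by omega
      rw [← hl]
      exact (ihφ hk.1 (l - k)).mp (hφ (l - k) (by omega) (by omega))
    · rintro ⟨j, hij, hψ, hφ⟩
      refine ⟨j - k, by omega, ?_, fun l h1 h2 => ?_⟩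
      · have hj : j - k + k = j := by omega
        have := (ihψ hk.2 (j - k))
        rw [hj] at this
        exact this.mpr hψ
      · exact (ihφ hk.1 l).mpr (hφ (l + k) (by omega) (by omega))

/-- for a CLTL formula `φ` over `(ℤ, <, =)` of `X`-length (at most) `k`, a
concrete model `σ` and its associated symbolic model `ρ = μ(σ)`:
`σ, 0 ⊨ φ` iff `ρ, k ⊨_s φ`. -/
theorem stmt7 {Va Vb : Type} [Fintype Vb] (φ : CLTL Va Vb) (k : ℕ)
    (hk : xlen φ ≤ k) (σ : ℕ → Va ⊕ Vb → ℤ) :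
    csat σ 0 φ ↔ ssat (mu k σ) k φ := by
  have := stmt7_aux k σ φ hk 0
  simpa using this
end

section
/- Let φ be a CLTL formula over (ℤ, <, =) of X-length k defining the winning condition of a single-sided CLTL game (the environment owns only future-blind variables, EV ⊆ V^b). Then the system player has a winning strategy in this game if and only if there exists a winning strategy tree (T, L). -/
/-- A system strategy in a (single-sided) CLTL game: given the history of full valuation
rounds and the environment's choice for its variables `E ⊆ Vb` in the current round, it
produces the full valuation of the current round (its values on the environment variables
are required to copy the environment's choice, see `EnvFaithful`). -/
def Strat (Va Vb : Type) (E : Finset Vb) : Type :=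
  List (Va ⊕ Vb → ℤ) → ({x : Vb // x ∈ E} → ℤ) → (Va ⊕ Vb → ℤ)

/-- The strategy never alters the environment's choices for the environment variables. -/
def EnvFaithful {Va Vb : Type} (E : Finset Vb) (st : Strat Va Vb E) : Prop :=
  ∀ (h : List (Va ⊕ Vb → ℤ)) (em : {x : Vb // x ∈ E} → ℤ) (x : Vb) (hx : x ∈ E),
    st h em (Sum.inr x) = em ⟨x, hx⟩

/-- The concrete model `σ` results from a play in which the system plays according to the
strategy `st` (the environment's choices in round `i` being the restriction of `σ i` to the
environment variables). -/
def Conforms {Va Vb : Type} (E : Finset Vb) (st : Strat Va Vb E)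
    (σ : ℕ → Va ⊕ Vb → ℤ) : Prop :=
  ∀ i : ℕ, σ i =
    st (List.ofFn fun j : Fin i => σ j.val) (fun e => σ i (Sum.inr e.val))
/-- The set `G` of gap functions associated with mappings of the environment variables
`E ⊆ Vb` to `ℤ` (with ceiling `|Vb| - 1`), as a type. -/
def GapFuns (Vb : Type) [Fintype Vb] (E : Finset Vb) : Type :=
  {g : {x : Vb // x ∈ E} → ℕ //
    ∃ em : {x : Vb // x ∈ E} → ℤ, g = gapFun (Fintype.card Vb - 1) em}

/-- The size of the frame labelling a tree node `η`: `min |η| (k+1)`. -/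
def nsize {α : Type} (k : ℕ) (η : List α) : ℕ := min η.length (k + 1)

/-- `f` is (the data of) an `s`-frame: its relation is a total pre-order on the look-ahead
terms with index `< s`, and for each `j < s` its `j`-th gap data is the gap function
associated with some mapping `Vb → ℤ`. -/
def IsFrameAt {Va Vb : Type} [Fintype Vb] (s : ℕ) (f : FrameData Va Vb) : Prop :=
  (∀ t1 t2 : ℕ × Va, t1.1 < s → t2.1 < s → (f.1 t1 t2 ∨ f.1 t2 t1)) ∧
  (∀ t1 t2 t3 : ℕ × Va, t1.1 < s → t2.1 < s → t3.1 < s →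
    f.1 t1 t2 → f.1 t2 t3 → f.1 t1 t3) ∧
  (∀ j < s, ∃ m : Vb → ℤ, f.2 j = gapFun (Fintype.card Vb - 1) m)

/-- One-step compatibility (for `X`-length `k`) between an `s`-frame `f` and the frame `g`
following it: if `s < k + 1` then `g` is an `(s+1)`-frame and the two frames agree on the
shared terms/offsets `< s`; otherwise both are `(k+1)`-frames and `g` is `f` shifted one
step to the left. -/
def OneStepT {Va Vb : Type} (k s : ℕ) (f g : FrameData Va Vb) : Prop :=
  if s < k + 1 then
    (∀ t1 t2 : ℕ × Va, t1.1 < s → t2.1 < s → (f.1 t1 t2 ↔ g.1 t1 t2)) ∧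
    (∀ j < s, f.2 j = g.2 j)
  else
    (∀ t1 t2 : ℕ × Va, t1.1 + 1 < k + 1 → t2.1 + 1 < k + 1 →
      (f.1 (t1.1 + 1, t1.2) (t2.1 + 1, t2.2) ↔ g.1 t1 t2)) ∧
    (∀ j : ℕ, j + 1 < k + 1 → f.2 (j + 1) = g.2 j)

/-- Gap compatibility between a gap function `g ∈ G` (for the environment variables) and an
`s`-frame `fr`: the gaps `fr` imposes between environment variables at its last offset
`s - 1` are the gaps imposed by `g`. -/
def GapCompat {Va Vb : Type} [Fintype Vb] {E : Finset Vb}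
    (g : GapFuns Vb E) (s : ℕ) (fr : FrameData Va Vb) : Prop :=
  ∀ x y : {x : Vb // x ∈ E},
    (g.val x : ℤ) - (g.val y : ℤ) =
      (fr.2 (s - 1) x.val : ℤ) - (fr.2 (s - 1) y.val : ℤ)

/-- A strategy tree (for `X`-length `k`): a `|G|`-branching tree whose nodes are labelled
with frames, the node `η` carrying a `min |η| (k+1)`-frame, such that each parent/child pair
is one-step compatible and each child is gap compatible with the gap function labelling the
edge leading to it. -/
def StrategyTree {Va Vb : Type} [Fintype Vb] (E : Finset Vb) (k : ℕ)
    (T : List (GapFuns Vb E) → FrameData Va Vb) : Prop :=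
  ∀ η : List (GapFuns Vb E),
    IsFrameAt (nsize k η) (T η) ∧
    ∀ g : GapFuns Vb E,
      OneStepT k (nsize k η) (T η) (T (η ++ [g])) ∧
      GapCompat g (nsize k (η ++ [g])) (T (η ++ [g]))

/-- The node at depth `i + 1` along the infinite path `π` of a tree. -/
def pathNodes {α : Type} (π : ℕ → α) (i : ℕ) : List α :=
  List.ofFn fun j : Fin (i + 1) => π j.val

/-- Two frame data agree as `s`-frames: same pre-order on terms with index `< s` and same
gap functions at offsets `< s`. -/
def FrameAgree {Va Vb : Type} (s : ℕ) (f g : FrameData Va Vb) : Prop :=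
  (∀ t1 t2 : ℕ × Va, t1.1 < s → t2.1 < s → (f.1 t1 t2 ↔ g.1 t1 t2)) ∧
  (∀ j < s, f.2 j = g.2 j)

/-- `(T, L)` is a winning strategy tree for the winning condition `φ` (of `X`-length `k`):
`T` is a strategy tree, and along every infinite path `π` the frame sequence `T(π)` is the
symbolic model associated with the concrete model `L(π)` and symbolically satisfies `φ` at
position `k`. -/
def WinningStrategyTree {Va Vb : Type} [Fintype Vb] (E : Finset Vb) (k : ℕ)
    (φ : CLTL Va Vb) (T : List (GapFuns Vb E) → FrameData Va Vb)
    (L : List (GapFuns Vb E) → (Va ⊕ Vb → ℤ)) : Prop :=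
  StrategyTree E k T ∧
  ∀ π : ℕ → GapFuns Vb E,
    (∀ i : ℕ, FrameAgree (min (i + 1) (k + 1)) (T (pathNodes π i))
      (mu k (fun j => L (pathNodes π j)) i)) ∧
    ssat (fun i => T (pathNodes π i)) k φ


open Finset

/-- next value in s above v -/
noncomputable def nx (s : Finset ℤ) (v : ℤ) : ℤ := (s.filter (fun w => v < w)).min.untopD v

noncomputable def GS (s : Finset ℤ) (c : ℕ) (a : ℤ) : ℕ :=
  ∑ v ∈ s.filter (fun w => w < a), min ((nx s v - v).toNat) c

lemma gapFun_eq_GS {V : Type} [Fintype V] (c : ℕ) (m : V → ℤ) (x : V) :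
    (∑ v ∈ (Finset.univ.image m).filter (fun w => w < m x),
      min ((((Finset.univ.image m).filter (fun w => v < w)).min.untopD v) - v).toNat c)
    = GS (Finset.univ.image m) c (m x) := rfl

lemma nx_spec {s : Finset ℤ} {v b : ℤ} (hb : b ∈ s) (hvb : v < b) :
    nx s v ∈ s ∧ v < nx s v ∧ ∀ u ∈ s, v < u → nx s v ≤ u := by
  have hne : (s.filter (fun w => v < w)).Nonempty := ⟨b, by simp [hb, hvb]⟩
  have hmin : (s.filter (fun w => v < w)).min = ((s.filter (fun w => v < w)).min' hne : ℤ) :=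
    (Finset.coe_min' hne).symm
  have hx : nx s v = (s.filter (fun w => v < w)).min' hne := by
    simp [nx, hmin]
  have hm := Finset.min'_mem _ hne
  simp only [Finset.mem_filter] at hm
  refine ⟨by rw [hx]; exact hm.1, by rw [hx]; exact hm.2, ?_⟩
  intro u hu hvu
  rw [hx]
  exact Finset.min'_le _ _ (by simp [hu, hvu])

lemma nx_eq {s : Finset ℤ} {a b : ℤ} (hb : b ∈ s) (hab : a < b)
    (hmid : ∀ u ∈ s, ¬(a < u ∧ u < b)) : nx s a = b := by
  obtain ⟨h1, h2, h3⟩ := nx_spec hb hab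
  have := h3 b hb hab
  rcases lt_or_eq_of_le this with h | h
  · exact absurd ⟨h2, h⟩ (hmid _ h1)
  · exact h

lemma GS_mono {s : Finset ℤ} {c : ℕ} {a b : ℤ} (hab : a ≤ b) : GS s c a ≤ GS s c b := by
  apply Finset.sum_le_sum_of_subset
  intro u hu; simp only [Finset.mem_filter] at *; exact ⟨hu.1, lt_of_lt_of_le hu.2 hab⟩

lemma GS_split {s : Finset ℤ} {c : ℕ} {a b : ℤ} (hab : a ≤ b) :
    GS s c b = GS s c a + ∑ v ∈ s.filter (fun v => a ≤ v ∧ v < b), min ((nx s v - v).toNat) c := by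
  unfold GS
  rw [← Finset.sum_union]
  · congr 1
    ext u
    simp only [Finset.mem_filter, Finset.mem_union]
    constructor
    · rintro ⟨hu, h2⟩
      rcases lt_or_ge u a with h | h
      · exact Or.inl ⟨hu, h⟩
      · exact Or.inr ⟨hu, h, h2⟩
    · rintro (⟨hu, h2⟩ | ⟨hu, h2, h3⟩)
      · exact ⟨hu, lt_of_lt_of_le h2 hab⟩
      · exact ⟨hu, h3⟩
  · rw [Finset.disjoint_left]
    intro u hu hu'
    simp only [Finset.mem_filter] at hu hu'
    omega

lemma GS_strict {s : Finset ℤ} {c : ℕ} (hc : 1 ≤ c) {a b : ℤ} (ha : a ∈ s) (hb : b ∈ s)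
    (hab : a < b) : GS s c a < GS s c b := by
  rw [GS_split (le_of_lt hab)]
  have hone : (s.filter (fun v => a ≤ v ∧ v < b)).Nonempty := ⟨a, by simp [ha, le_refl, hab]⟩
  have hstep : ∀ v ∈ s.filter (fun v => a ≤ v ∧ v < b), 1 ≤ min ((nx s v - v).toNat) c := by
    intro v hv
    simp only [Finset.mem_filter] at hv
    obtain ⟨_, h2, _⟩ := nx_spec hb hv.2.2
    omega
  have := Finset.card_nsmul_le_sum _ _ 1 hstep
  simp only [smul_eq_mul, mul_one] at this
  have hcard : 1 ≤ (s.filter (fun v => a ≤ v ∧ v < b)).card := Finset.card_pos.2 hone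
  omega

lemma GS_le_iff {s : Finset ℤ} {c : ℕ} (hc : 1 ≤ c) {a b : ℤ} (ha : a ∈ s) (hb : b ∈ s) :
    GS s c a ≤ GS s c b ↔ a ≤ b := by
  constructor
  · intro h
    by_contra hab
    exact absurd h (not_le.2 (GS_strict hc hb ha (by omega)))
  · exact GS_mono

lemma GS_lt_iff {s : Finset ℤ} {c : ℕ} (hc : 1 ≤ c) {a b : ℤ} (ha : a ∈ s) (hb : b ∈ s) :
    GS s c a < GS s c b ↔ a < b := by
  rw [← not_le, ← not_le, not_iff_not, GS_le_iff hc hb ha]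

lemma GS_eq_iff {s : Finset ℤ} {c : ℕ} (hc : 1 ≤ c) {a b : ℤ} (ha : a ∈ s) (hb : b ∈ s) :
    GS s c a = GS s c b ↔ a = b := by
  rw [le_antisymm_iff, le_antisymm_iff, GS_le_iff hc ha hb, GS_le_iff hc hb ha]

/-- telescoping sum when all gaps in range are ≤ c -/
lemma GS_telescope {s : Finset ℤ} {c : ℕ} {b : ℤ} (hb : b ∈ s) :
    ∀ a, a ∈ s → a ≤ b → (∀ v ∈ s, a ≤ v → v < b → (nx s v - v).toNat ≤ c) →
    (∑ v ∈ s.filter (fun v => a ≤ v ∧ v < b), min ((nx s v - v).toNat) c) = (b - a).toNat := by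
  intro a
  obtain ⟨n, hn⟩ : ∃ n, (b - a).toNat = n := ⟨_, rfl⟩
  induction n using Nat.strong_induction_on generalizing a with
  | _ n ih =>
    intro ha hab hcap
    rcases eq_or_lt_of_le hab with rfl | hlt
    · rw [Finset.filter_false_of_mem (by intro u hu; omega)]
      simp
    · obtain ⟨h1, h2, h3⟩ := nx_spec hb hlt
      set a' := nx s a with ha'
      have ha'b : a' ≤ b := h3 b hb hlt
      have hfe : s.filter (fun v => a ≤ v ∧ v < b)
          = insert a (s.filter (fun v => a' ≤ v ∧ v < b)) := by
        ext u
        simp only [Finset.mem_filter, Finset.mem_insert]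
        constructor
        · rintro ⟨hu, h4, h5⟩
          rcases eq_or_lt_of_le h4 with rfl | h6
          · exact Or.inl rfl
          · exact Or.inr ⟨hu, h3 u hu h6, h5⟩
        · rintro (rfl | ⟨hu, h4, h5⟩)
          · exact ⟨ha, le_refl _, hlt⟩
          · exact ⟨hu, by omega, h5⟩
      rw [hfe, Finset.sum_insert (by simp only [Finset.mem_filter]; push_neg; intro _ h; omega)]
      have hrec := ih ((b - a').toNat) (by omega) a' (by omega) h1 ha'b
        (fun v hv h4 h5 => hcap v hv (by omega) h5)
      rw [hrec]
      have hcapa := hcap a ha (le_refl _) hlt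
      rw [← ha']
      omega

/-- chain bound via superadditive B -/
lemma chain_bound (s : Finset ℤ) (t : ℤ → ℤ) (B : ℤ → ℤ → ℤ)
    (hB : ∀ v u w, v < u → u < w → u ∈ s → B v w ≤ B v u + B u w)
    (hstep : ∀ v ∈ s, ∀ w ∈ s, v < w → (∀ u ∈ s, ¬(v < u ∧ u < w)) → B v w ≤ t w - t v) :
    ∀ v ∈ s, ∀ w ∈ s, v < w → B v w ≤ t w - t v := by
  intro v hv w hw hvw
  obtain ⟨n, hn⟩ : ∃ n, (s.filter (fun u => v < u ∧ u < w)).card = n := ⟨_, rfl⟩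
  induction n using Nat.strong_induction_on generalizing v w with
  | _ n ih =>
    rcases Finset.eq_empty_or_nonempty (s.filter (fun u => v < u ∧ u < w)) with he | ⟨u, hu⟩
    · apply hstep v hv w hw hvw
      rw [Finset.eq_empty_iff_forall_notMem] at he
      exact fun u hu hc => he u (Finset.mem_filter.2 ⟨hu, hc⟩)
    · simp only [Finset.mem_filter] at hu
      obtain ⟨hus, huv, huw⟩ := hu
      have hss1 : s.filter (fun x => v < x ∧ x < u) ⊂ s.filter (fun x => v < x ∧ x < w) := by
        constructor
        · intro x hx; simp only [Finset.mem_filter] at hx ⊢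
          exact ⟨hx.1, hx.2.1, lt_trans hx.2.2 huw⟩
        · intro hcon
          have := hcon (Finset.mem_filter.2 ⟨hus, huv, huw⟩)
          simp only [Finset.mem_filter] at this; omega
      have hss2 : s.filter (fun x => u < x ∧ x < w) ⊂ s.filter (fun x => v < x ∧ x < w) := by
        constructor
        · intro x hx; simp only [Finset.mem_filter] at hx ⊢
          exact ⟨hx.1, lt_trans huv hx.2.1, hx.2.2⟩
        · intro hcon
          have := hcon (Finset.mem_filter.2 ⟨hus, huv, huw⟩)
          simp only [Finset.mem_filter] at this; omega
      have h1 := ih _ (by rw [← hn]; exact Finset.card_lt_card hss1) v hv u hus huv rfl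
      have h2 := ih _ (by rw [← hn]; exact Finset.card_lt_card hss2) u hus w hw huw rfl
      have := hB v u w huv huw hus
      omega

/-! ### the re-embedding construction -/

noncomputable def mbv (EV : Finset ℤ) (z : ℤ) : ℤ := (EV.filter (fun v => v ≤ z)).max.unbotD 0

lemma mbv_spec {EV : Finset ℤ} (hn : EV.Nonempty) {z : ℤ} (hz : EV.min' hn ≤ z) :
    mbv EV z ∈ EV ∧ mbv EV z ≤ z ∧ ∀ u ∈ EV, u ≤ z → u ≤ mbv EV z := by
  have hne : (EV.filter (fun v => v ≤ z)).Nonempty := ⟨EV.min' hn, by simp [Finset.min'_mem, hz]⟩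
  have hmax : (EV.filter (fun v => v ≤ z)).max = ((EV.filter (fun v => v ≤ z)).max' hne : ℤ) :=
    (Finset.coe_max' hne).symm
  have hx : mbv EV z = (EV.filter (fun v => v ≤ z)).max' hne := by simp [mbv, hmax]
  have hm := Finset.max'_mem _ hne
  simp only [Finset.mem_filter] at hm
  refine ⟨by rw [hx]; exact hm.1, by rw [hx]; exact hm.2, ?_⟩
  intro u hu huz
  rw [hx]
  exact Finset.le_max' _ _ (by simp [hu, huz])

noncomputable def Aemb (s EV : Finset ℤ) (t : ℤ → ℤ) (z : ℤ) : ℤ :=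
  if hn : EV.Nonempty then
    if z < EV.min' hn then
      t (EV.min' hn) - ((s.filter (fun u => z ≤ u ∧ u < EV.min' hn)).card : ℤ)
    else t (mbv EV z) + ((s.filter (fun u => mbv EV z < u ∧ u ≤ z)).card : ℤ)
  else z

section Emb
variable {s EV : Finset ℤ} {t : ℤ → ℤ}

/-- the room hypothesis -/
def Room (s EV : Finset ℤ) (t : ℤ → ℤ) : Prop :=
  ∀ v ∈ EV, ∀ w ∈ EV, v < w → ((s.filter (fun u => v < u ∧ u < w)).card : ℤ) + 1 ≤ t w - t v

lemma room_mono (hr : Room s EV t) {v w : ℤ} (hv : v ∈ EV) (hw : w ∈ EV) (hvw : v ≤ w) :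
    t v ≤ t w := by
  rcases eq_or_lt_of_le hvw with rfl | h
  · exact le_refl _
  · have := hr v hv w hw h
    have : (0:ℤ) ≤ ((s.filter (fun u => v < u ∧ u < w)).card : ℤ) := Int.ofNat_nonneg _
    omega

lemma Aemb_mem_EV (hsub : EV ⊆ s) {z : ℤ} (hz : z ∈ EV) : Aemb s EV t z = t z := by
  have hn : EV.Nonempty := ⟨z, hz⟩
  have hmin : ¬ (z < EV.min' hn) := not_lt.2 (Finset.min'_le _ _ hz)
  obtain ⟨h1, h2, h3⟩ := mbv_spec hn (Finset.min'_le _ _ hz)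
  have hmb : mbv EV z = z := le_antisymm h2 (h3 z hz (le_refl _))
  have hcard : (s.filter (fun u => z < u ∧ u ≤ z)) = ∅ :=
    Finset.filter_false_of_mem (by intro u hu; omega)
  simp [Aemb, hn, hmin, hmb, hcard]

lemma Aemb_strictMono (hsub : EV ⊆ s) (hr : Room s EV t) :
    ∀ z ∈ s, ∀ z' ∈ s, z < z' → Aemb s EV t z < Aemb s EV t z' := by
  intro z hz z' hz' hzz
  rcases Finset.eq_empty_or_nonempty EV with rfl | hn
  · simp only [Aemb]
    rw [dif_neg (by simp), dif_neg (by simp)]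
    exact hzz
  · have hminmem := Finset.min'_mem EV hn
    rcases lt_or_ge z (EV.min' hn) with h1 | h1
    · rcases lt_or_ge z' (EV.min' hn) with h2 | h2
      · -- both below min
        simp only [Aemb, dif_pos hn, if_pos h1, if_pos h2]
        have hss : s.filter (fun u => z' ≤ u ∧ u < EV.min' hn)
            ⊂ s.filter (fun u => z ≤ u ∧ u < EV.min' hn) := by
          constructor
          · intro x hx; simp only [Finset.mem_filter] at hx ⊢
            exact ⟨hx.1, by omega, hx.2.2⟩
          · intro hcon
            have := hcon (Finset.mem_filter.2 ⟨hz, le_refl _, h1⟩)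
            simp only [Finset.mem_filter] at this; omega
        have := Finset.card_lt_card hss
        omega
      · -- z below, z' above
        obtain ⟨hm1, hm2, hm3⟩ := mbv_spec hn h2
        simp only [Aemb, dif_pos hn, if_pos h1, if_neg (not_lt.2 h2)]
        have hcard1 : 1 ≤ (s.filter (fun u => z ≤ u ∧ u < EV.min' hn)).card :=
          Finset.card_pos.2 ⟨z, Finset.mem_filter.2 ⟨hz, le_refl _, h1⟩⟩
        have htle : t (EV.min' hn) ≤ t (mbv EV z') :=
          room_mono hr hminmem hm1 (Finset.min'_le _ _ hm1)
        have : (0:ℤ) ≤ ((s.filter (fun u => mbv EV z' < u ∧ u ≤ z')).card : ℤ) :=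
          Int.ofNat_nonneg _
        omega
    · rcases lt_or_ge z' (EV.min' hn) with h2 | h2
      · omega
      · obtain ⟨hm1, hm2, hm3⟩ := mbv_spec hn h1
        obtain ⟨hm1', hm2', hm3'⟩ := mbv_spec hn h2
        simp only [Aemb, dif_pos hn, if_neg (not_lt.2 h1), if_neg (not_lt.2 h2)]
        have hvv : mbv EV z ≤ mbv EV z' := hm3' _ hm1 (le_trans hm2 (le_of_lt hzz))
        rcases eq_or_lt_of_le hvv with heq | hlt
        · rw [← heq]
          have hss : s.filter (fun u => mbv EV z < u ∧ u ≤ z)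
              ⊂ s.filter (fun u => mbv EV z < u ∧ u ≤ z') := by
            constructor
            · intro x hx; simp only [Finset.mem_filter] at hx ⊢
              exact ⟨hx.1, hx.2.1, by omega⟩
            · intro hcon
              have := hcon (Finset.mem_filter.2 ⟨hz', by rw [← heq] at hm2'; omega, le_refl _⟩)
              simp only [Finset.mem_filter] at this; omega
          have := Finset.card_lt_card hss
          omega
        · -- mbv z < mbv z'
          have hzlt : z < mbv EV z' := by
            by_contra hcon
            push_neg at hcon
            exact absurd (hm3 _ hm1' hcon) (not_le.2 hlt)
          have hsubcnt : s.filter (fun u => mbv EV z < u ∧ u ≤ z)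
              ⊆ s.filter (fun u => mbv EV z < u ∧ u < mbv EV z') := by
            intro x hx; simp only [Finset.mem_filter] at hx ⊢
            exact ⟨hx.1, hx.2.1, by omega⟩
          have hcle := Finset.card_le_card hsubcnt
          have hroom := hr _ hm1 _ hm1' hlt
          have : (0:ℤ) ≤ ((s.filter (fun u => mbv EV z' < u ∧ u ≤ z')).card : ℤ) :=
            Int.ofNat_nonneg _
          omega

lemma Aemb_le_iff (hsub : EV ⊆ s) (hr : Room s EV t) {z z' : ℤ} (hz : z ∈ s) (hz' : z' ∈ s) :
    Aemb s EV t z ≤ Aemb s EV t z' ↔ z ≤ z' := by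
  constructor
  · intro h
    by_contra hcon
    exact absurd h (not_le.2 (Aemb_strictMono hsub hr _ hz' _ hz (by omega)))
  · intro h
    rcases eq_or_lt_of_le h with rfl | h
    · exact le_refl _
    · exact le_of_lt (Aemb_strictMono hsub hr _ hz _ hz' h)

/-- the gap-cap property: adjacent gaps of the image of `Aemb` are at most `c`
(assuming `EV` nonempty) -/
lemma Aemb_gap_le (hsub : EV ⊆ s) (hr : Room s EV t) (hn : EV.Nonempty) {c : ℕ} (hc : 1 ≤ c)
    (hcap : ∀ v ∈ EV, ∀ w ∈ EV, v < w → (∀ u ∈ EV, ¬(v < u ∧ u < w)) →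
      t w - t v ≤ (c : ℤ) + ((s.filter (fun u => v < u ∧ u < w)).card : ℤ)) :
    ∀ u ∈ s, ∀ u' ∈ s, u < u' → (∀ w ∈ s, ¬(u < w ∧ w < u')) →
      Aemb s EV t u' - Aemb s EV t u ≤ c := by
  intro u hu u' hu' huu hadj
  have hminmem := Finset.min'_mem EV hn
  rcases lt_or_ge u' (EV.min' hn) with h2 | h2
  · -- both strictly below min
    have h1 : u < EV.min' hn := lt_trans huu h2
    simp only [Aemb, dif_pos hn, if_pos h1, if_pos h2]
    have hfe : s.filter (fun x => u ≤ x ∧ x < EV.min' hn)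
        = insert u (s.filter (fun x => u' ≤ x ∧ x < EV.min' hn)) := by
      ext x
      simp only [Finset.mem_filter, Finset.mem_insert]
      constructor
      · rintro ⟨hx, h4, h5⟩
        rcases eq_or_lt_of_le h4 with rfl | h6
        · exact Or.inl rfl
        · have := hadj x hx
          exact Or.inr ⟨hx, by omega, h5⟩
      · rintro (rfl | ⟨hx, h4, h5⟩)
        · exact ⟨hu, le_refl _, h1⟩
        · exact ⟨hx, by omega, h5⟩
    have hnm : u ∉ s.filter (fun x => u' ≤ x ∧ x < EV.min' hn) := by
      simp only [Finset.mem_filter]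
      push_neg
      intro _ h
      omega
    rw [hfe, Finset.card_insert_of_notMem hnm]
    push_cast
    have hc' : (1:ℤ) ≤ (c:ℤ) := by exact_mod_cast hc
    linarith
  · rcases lt_or_ge u (EV.min' hn) with h1 | h1
    · -- u below min, u' ≥ min: adjacency forces u' = min
      have hu'eq : u' = EV.min' hn := by
        have := hadj (EV.min' hn) (hsub hminmem)
        omega
      have hAu' : Aemb s EV t u' = t u' := Aemb_mem_EV hsub (hu'eq ▸ hminmem)
      have hAu : Aemb s EV t u
          = t (EV.min' hn) - ((s.filter (fun x => u ≤ x ∧ x < EV.min' hn)).card : ℤ) := by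
        simp only [Aemb, dif_pos hn, if_pos h1]
      have hfe : s.filter (fun x => u ≤ x ∧ x < EV.min' hn) = {u} := by
        ext x
        simp only [Finset.mem_filter, Finset.mem_singleton]
        constructor
        · rintro ⟨hx, h4, h5⟩
          have := hadj x hx
          omega
        · rintro rfl
          exact ⟨hu, le_refl _, h1⟩
      rw [hAu', hAu, hu'eq, hfe]
      have hc' : (1:ℤ) ≤ (c:ℤ) := by exact_mod_cast hc
      simp
      linarith
    · -- both ≥ min
      obtain ⟨hm1, hm2, hm3⟩ := mbv_spec hn h1
      obtain ⟨hm1', hm2', hm3'⟩ := mbv_spec hn (le_trans h1 (le_of_lt huu))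
      have hvv : mbv EV u ≤ mbv EV u' := hm3' _ hm1 (le_trans hm2 (le_of_lt huu))
      simp only [Aemb, dif_pos hn, if_neg (not_lt.2 h1),
        if_neg (not_lt.2 (le_trans h1 (le_of_lt huu)))]
      rcases eq_or_lt_of_le hvv with heq | hlt
      · rw [← heq]
        have hfe : s.filter (fun x => mbv EV u < x ∧ x ≤ u')
            = insert u' (s.filter (fun x => mbv EV u < x ∧ x ≤ u)) := by
          ext x
          simp only [Finset.mem_filter, Finset.mem_insert]
          constructor
          · rintro ⟨hx, h4, h5⟩
            rcases eq_or_lt_of_le h5 with rfl | h6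
            · exact Or.inl rfl
            · have := hadj x hx
              exact Or.inr ⟨hx, h4, by omega⟩
          · rintro (rfl | ⟨hx, h4, h5⟩)
            · exact ⟨hu', by rw [← heq] at hm2'; omega, le_refl _⟩
            · exact ⟨hx, h4, by omega⟩
        have hnm : u' ∉ s.filter (fun x => mbv EV u < x ∧ x ≤ u) := by
          simp only [Finset.mem_filter]
          push_neg
          intro _ _
          omega
        rw [hfe, Finset.card_insert_of_notMem hnm]
        push_cast
        have hc' : (1:ℤ) ≤ (c:ℤ) := by exact_mod_cast hc
        linarith
      · -- mbv u < mbv u' : then mbv u' = u' ∈ EV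
        have hv'u : u < mbv EV u' := by
          by_contra hcon
          push_neg at hcon
          exact absurd (hm3 _ hm1' hcon) (not_le.2 hlt)
        have hu'eq : mbv EV u' = u' := by
          have := hadj (mbv EV u') (hsub hm1')
          omega
        have hcnt0 : s.filter (fun x => mbv EV u' < x ∧ x ≤ u') = ∅ :=
          Finset.filter_false_of_mem (by intro x hx; rw [hu'eq]; omega)
        have hadjEV : ∀ w ∈ EV, ¬(mbv EV u < w ∧ w < u') := by
          intro w hw hcon
          have hws := hsub hw
          have := hadj w hws
          have hwu : w ≤ u := by omega
          exact absurd (hm3 w hw hwu) (not_le.2 hcon.1)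
        have hcapu := hcap _ hm1 _ (hu'eq ▸ hm1') (by omega) hadjEV
        have hfe2 : s.filter (fun x => mbv EV u < x ∧ x < u')
            = s.filter (fun x => mbv EV u < x ∧ x ≤ u) := by
          ext x
          simp only [Finset.mem_filter]
          constructor
          · rintro ⟨hx, h4, h5⟩
            have := hadj x hx
            exact ⟨hx, h4, by omega⟩
          · rintro ⟨hx, h4, h5⟩
            exact ⟨hx, h4, by omega⟩
        rw [hcnt0]
        rw [hfe2] at hcapu
        rw [hu'eq]
        simp
        linarith

end Emb

/-! ### gapFun level lemmas -/

section GapFunLemmas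
variable {V : Type} [Fintype V]

lemma gapFun_GS (c : ℕ) (m : V → ℤ) (x : V) :
    gapFun c m x = GS (Finset.univ.image m) c (m x) := rfl

lemma mem_img (m : V → ℤ) (x : V) : m x ∈ Finset.univ.image m :=
  Finset.mem_image.2 ⟨x, Finset.mem_univ x, rfl⟩

lemma gapFun_lt_iff' {c : ℕ} (hc : 1 ≤ c) (m : V → ℤ) (x y : V) :
    gapFun c m x < gapFun c m y ↔ m x < m y := by
  rw [gapFun_GS, gapFun_GS]
  exact GS_lt_iff hc (mem_img m x) (mem_img m y)

lemma gapFun_le_iff' {c : ℕ} (hc : 1 ≤ c) (m : V → ℤ) (x y : V) :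
    gapFun c m x ≤ gapFun c m y ↔ m x ≤ m y := by
  rw [gapFun_GS, gapFun_GS]
  exact GS_le_iff hc (mem_img m x) (mem_img m y)

lemma gapFun_eq_iff' {c : ℕ} (hc : 1 ≤ c) (m : V → ℤ) (x y : V) :
    gapFun c m x = gapFun c m y ↔ m x = m y := by
  rw [gapFun_GS, gapFun_GS]
  exact GS_eq_iff hc (mem_img m x) (mem_img m y)

lemma card_pos_of_lt {m : V → ℤ} {x y : V} (h : m x < m y) : 1 ≤ Fintype.card V - 1 := by
  have hxy : x ≠ y := by intro h'; rw [h'] at h; omega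
  have := Fintype.one_lt_card_iff.2 ⟨x, y, hxy⟩
  omega

lemma gapFun_lt_iff (m : V → ℤ) (x y : V) :
    gapFun (Fintype.card V - 1) m x < gapFun (Fintype.card V - 1) m y ↔ m x < m y := by
  constructor
  · intro h
    by_contra hcon
    push_neg at hcon
    rw [gapFun_GS, gapFun_GS] at h
    exact absurd (GS_mono hcon) (not_le.2 h)
  · intro h
    exact (gapFun_lt_iff' (card_pos_of_lt h) m x y).2 h

lemma gapFun_eq_of_eq {c : ℕ} {m : V → ℤ} {x y : V} (h : m x = m y) :
    gapFun c m x = gapFun c m y := by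
  rw [gapFun_GS, gapFun_GS, h]

lemma gapFun_eq_iff (m : V → ℤ) (x y : V) :
    gapFun (Fintype.card V - 1) m x = gapFun (Fintype.card V - 1) m y ↔ m x = m y := by
  constructor
  · intro h
    by_contra hcon
    rcases lt_or_gt_of_ne hcon with h' | h'
    · exact absurd h (ne_of_lt ((gapFun_lt_iff m x y).2 h'))
    · exact absurd h.symm (ne_of_lt ((gapFun_lt_iff m y x).2 h'))
  · exact gapFun_eq_of_eq

end GapFunLemmas

section SubtypeImg
variable {Vb : Type} [Fintype Vb]

lemma img_subtype (E : Finset Vb) (m : Vb → ℤ) :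
    (Finset.univ.image (fun e : {x // x ∈ E} => m e.val)) = E.image m := by
  ext v
  simp only [Finset.mem_image, Finset.mem_univ, true_and, Subtype.exists]
  constructor
  · rintro ⟨e, he, rfl⟩
    exact ⟨e, he, rfl⟩
  · rintro ⟨e, he, rfl⟩
    exact ⟨e, he, rfl⟩

lemma gapFun_subtype (E : Finset Vb) (c : ℕ) (m : Vb → ℤ) (e : {x // x ∈ E}) :
    gapFun c (fun e : {x // x ∈ E} => m e.val) e = GS (E.image m) c (m e.val) := by
  rw [gapFun_GS, img_subtype]

end SubtypeImg

/-- gap differences of a composition with a gap-bounded strictly monotone map telescope -/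
lemma gapFun_comp_diff {V : Type} [Fintype V] (c : ℕ) (m : V → ℤ) (A : ℤ → ℤ)
    (hmono : ∀ z ∈ Finset.univ.image m, ∀ z' ∈ Finset.univ.image m, z < z' → A z < A z')
    (hgap : ∀ u ∈ Finset.univ.image m, ∀ u' ∈ Finset.univ.image m, u < u' →
      (∀ w ∈ Finset.univ.image m, ¬(u < w ∧ w < u')) → A u' - A u ≤ c) :
    ∀ x y : V, (gapFun c (fun v => A (m v)) x : ℤ) - gapFun c (fun v => A (m v)) y
      = A (m x) - A (m y) := by
  have key : ∀ x y : V, m y ≤ m x →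
      (gapFun c (fun v => A (m v)) x : ℤ) - gapFun c (fun v => A (m v)) y
        = A (m x) - A (m y) := by
    intro x y hyx
    set s := Finset.univ.image m with hs
    have himg : Finset.univ.image (fun v => A (m v)) = s.image A := by
      rw [hs, Finset.image_image]
      rfl
    have hGx : gapFun c (fun v => A (m v)) x = GS (s.image A) c (A (m x)) := by
      rw [gapFun_GS]
      unfold GS
      rw [himg]
    have hGy : gapFun c (fun v => A (m v)) y = GS (s.image A) c (A (m y)) := by
      rw [gapFun_GS]
      unfold GS
      rw [himg]
    have hAyx : A (m y) ≤ A (m x) := by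
      rcases eq_or_lt_of_le hyx with h | h
      · rw [h]
      · exact le_of_lt (hmono _ (mem_img m y) _ (mem_img m x) h)
    have hmemy : A (m y) ∈ s.image A := Finset.mem_image_of_mem A (mem_img m y)
    have hmemx : A (m x) ∈ s.image A := Finset.mem_image_of_mem A (mem_img m x)
    have hsplit := GS_split (s := s.image A) (c := c) hAyx
    have hcap : ∀ v ∈ s.image A, A (m y) ≤ v → v < A (m x) →
        (nx (s.image A) v - v).toNat ≤ c := by
      intro v hv h1 h2
      obtain ⟨u, hu, rfl⟩ := Finset.mem_image.1 hv
      have humx : u < m x := by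
        by_contra hcon
        push_neg at hcon
        rcases eq_or_lt_of_le hcon with h | h
        · rw [h] at h2; omega
        · exact absurd h2 (not_lt.2 (le_of_lt (hmono _ (mem_img m x) _ hu h)))
      obtain ⟨hn1, hn2, hn3⟩ := nx_spec (mem_img m x) humx
      set u' := nx s u with hu'
      have hadj : ∀ w ∈ s, ¬(u < w ∧ w < u') := by
        intro w hw hcon
        exact absurd (hn3 w hw hcon.1) (not_le.2 hcon.2)
      have hnx : nx (s.image A) (A u) = A u' := by
        apply nx_eq (Finset.mem_image_of_mem A hn1) (hmono _ hu _ hn1 hn2)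
        intro w hw hcon
        obtain ⟨w0, hw0, rfl⟩ := Finset.mem_image.1 hw
        have h1' : u < w0 := by
          by_contra hc'
          push_neg at hc'
          rcases eq_or_lt_of_le hc' with h | h
          · rw [h] at hcon; omega
          · exact absurd hcon.1 (not_lt.2 (le_of_lt (hmono _ hw0 _ hu h)))
        have h2' : w0 < u' := by
          by_contra hc'
          push_neg at hc'
          rcases eq_or_lt_of_le hc' with h | h
          · rw [← h] at hcon; omega
          · exact absurd hcon.2 (not_lt.2 (le_of_lt (hmono _ hn1 _ hw0 h)))
        exact hadj w0 hw0 ⟨h1', h2'⟩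
      rw [hnx]
      have := hgap u hu u' hn1 hn2 hadj
      omega
    have htel := GS_telescope hmemx (A (m y)) hmemy hAyx hcap
    have h0 : (0:ℤ) ≤ A (m x) - A (m y) := by omega
    rw [hGx, hGy, hsplit, htel]
    push_cast
    omega
  intro x y
  rcases le_total (m y) (m x) with h | h
  · exact key x y h
  · have := key y x h
    omega

/-! ### Room from adjacent steps -/

lemma room_of_adjacent {s EV : Finset ℤ} (hsub : EV ⊆ s) (t : ℤ → ℤ)
    (hstep : ∀ v ∈ EV, ∀ w ∈ EV, v < w → (∀ u ∈ EV, ¬(v < u ∧ u < w)) →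
      ((s.filter (fun u => v < u ∧ u < w)).card : ℤ) + 1 ≤ t w - t v) :
    Room s EV t := by
  intro v hv w hw hvw
  have := chain_bound EV t (fun v w => ((s.filter (fun u => v < u ∧ u < w)).card : ℤ) + 1)
    ?_ ?_ v hv w hw hvw
  · exact this
  · intro v u w hvu huw hu
    have hsb : s.filter (fun x => v < x ∧ x < w)
        ⊆ (s.filter (fun x => v < x ∧ x < u)) ∪ insert u (s.filter (fun x => u < x ∧ x < w)) := by
      intro x hx
      simp only [Finset.mem_filter, Finset.mem_union, Finset.mem_insert] at hx ⊢
      rcases lt_trichotomy x u with h | h | h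
      · exact Or.inl ⟨hx.1, hx.2.1, h⟩
      · exact Or.inr (Or.inl h)
      · exact Or.inr (Or.inr ⟨hx.1, h, hx.2.2⟩)
    have h1 := Finset.card_le_card hsb
    have h2 := Finset.card_union_le (s.filter (fun x => v < x ∧ x < u))
      (insert u (s.filter (fun x => u < x ∧ x < w)))
    have h3 := Finset.card_insert_le u (s.filter (fun x => u < x ∧ x < w))
    push_cast
    push_cast at h1 h2 h3
    omega
  · exact hstep

/-! ### the two embedding lemmas -/

section TwoEmb
variable {Vb : Type} [Fintype Vb]

lemma adjacent_EV_singleton {EV : Finset ℤ} {v w : ℤ} (hv : v ∈ EV) (hvw : v < w)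
    (hadj : ∀ u ∈ EV, ¬(v < u ∧ u < w)) :
    EV.filter (fun u => v ≤ u ∧ u < w) = {v} := by
  ext u
  simp only [Finset.mem_filter, Finset.mem_singleton]
  constructor
  · rintro ⟨hu, h1, h2⟩
    have := hadj u hu
    omega
  · rintro rfl
    exact ⟨hv, le_refl _, hvw⟩

/-- gapFun-difference over a single `EV`-adjacent pair is `min (gap) c` -/
lemma GS_adjacent {EV : Finset ℤ} {c : ℕ} {v w : ℤ} (hv : v ∈ EV) (hw : w ∈ EV) (hvw : v < w)
    (hadj : ∀ u ∈ EV, ¬(v < u ∧ u < w)) :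
    GS EV c w = GS EV c v + min (w - v).toNat c := by
  have := GS_split (s := EV) (c := c) (le_of_lt hvw)
  rw [this, adjacent_EV_singleton hv hvw hadj, Finset.sum_singleton, nx_eq hw hvw hadj]

lemma embA (E : Finset Vb) (m : Vb → ℤ) :
    ∃ m' : Vb → ℤ,
      (∀ x y : Vb, m' x ≤ m' y ↔ m x ≤ m y) ∧
      (∀ x y : {x // x ∈ E},
        (gapFun (Fintype.card Vb - 1) m' x.val : ℤ) - gapFun (Fintype.card Vb - 1) m' y.val
        = (gapFun (Fintype.card Vb - 1) (fun e : {x // x ∈ E} => m e.val) x : ℤ)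
          - gapFun (Fintype.card Vb - 1) (fun e : {x // x ∈ E} => m e.val) y) := by
  rcases Finset.eq_empty_or_nonempty E with rfl | hE
  · exact ⟨m, fun x y => Iff.rfl, fun x y => (Finset.notMem_empty _ x.2).elim⟩
  rcases le_or_gt (Fintype.card Vb) 1 with hcard | hcard
  · refine ⟨m, fun x y => Iff.rfl, fun x y => ?_⟩
    have hss : Subsingleton Vb := Fintype.card_le_one_iff_subsingleton.1 hcard
    have : x = y := Subtype.ext (Subsingleton.elim x.val y.val)
    rw [this]
    ring
  · set c := Fintype.card Vb - 1 with hc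
    have hc1 : 1 ≤ c := by omega
    set s := Finset.univ.image m with hs
    set EV := E.image m with hEV
    have hsub : EV ⊆ s := by
      intro v hv
      obtain ⟨e, he, rfl⟩ := Finset.mem_image.1 hv
      exact mem_img m e
    have hEVne : EV.Nonempty := hE.image m
    set t : ℤ → ℤ := fun v => (GS EV c v : ℤ) with ht
    -- counting bounds for adjacent pairs
    have hstep : ∀ v ∈ EV, ∀ w ∈ EV, v < w → (∀ u ∈ EV, ¬(v < u ∧ u < w)) →
        ((s.filter (fun u => v < u ∧ u < w)).card : ℤ) + 1 ≤ t w - t v := by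
      intro v hv w hw hvw hadj
      have hGS := GS_adjacent (c := c) hv hw hvw hadj
      have hb1 : (s.filter (fun u => v < u ∧ u < w)).card ≤ (w - v - 1).toNat := by
        rw [← Int.card_Ioo]
        apply Finset.card_le_card
        intro u hu
        simp only [Finset.mem_filter] at hu
        simp only [Finset.mem_Ioo]
        exact hu.2
      have hb2 : (s.filter (fun u => v < u ∧ u < w)).card + 2 ≤ Fintype.card Vb := by
        have hsb : s.filter (fun u => v < u ∧ u < w) ⊆ (s.erase v).erase w := by
          intro u hu
          simp only [Finset.mem_filter] at hu
          apply Finset.mem_erase.2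
          refine ⟨by omega, Finset.mem_erase.2 ⟨by omega, hu.1⟩⟩
        have h1 := Finset.card_le_card hsb
        have h2 : ((s.erase v).erase w).card = s.card - 2 := by
          rw [Finset.card_erase_of_mem (Finset.mem_erase.2 ⟨by omega, hsub hw⟩),
            Finset.card_erase_of_mem (hsub hv)]
          omega
        have h3 : s.card ≤ Fintype.card Vb := by
          rw [hs, ← Finset.card_univ]
          exact Finset.card_image_le
        have h4 : 2 ≤ s.card := by
          have : ({v, w} : Finset ℤ) ⊆ s := by
            intro u hu
            simp only [Finset.mem_insert, Finset.mem_singleton] at hu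
            rcases hu with rfl | rfl
            · exact hsub hv
            · exact hsub hw
          have := Finset.card_le_card this
          rw [Finset.card_insert_of_notMem (by simp; omega), Finset.card_singleton] at this
          omega
        omega
      rw [ht]
      simp only
      rw [hGS]
      push_cast
      omega
    have hroom : Room s EV t := room_of_adjacent hsub t hstep
    refine ⟨fun v => Aemb s EV t (m v), ?_, ?_⟩
    · intro x y
      exact Aemb_le_iff hsub hroom (mem_img m x) (mem_img m y)
    · intro x y
      have hgap := Aemb_gap_le hsub hroom hEVne hc1 ?_
      · have hdiff := gapFun_comp_diff c m (Aemb s EV t) (Aemb_strictMono hsub hroom) hgap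
        have hx : m x.val ∈ EV := Finset.mem_image.2 ⟨x.val, x.2, rfl⟩
        have hy : m y.val ∈ EV := Finset.mem_image.2 ⟨y.val, y.2, rfl⟩
        rw [hdiff x.val y.val, Aemb_mem_EV hsub hx, Aemb_mem_EV hsub hy,
          gapFun_subtype, gapFun_subtype]
      · intro v hv w hw hvw hadj
        have hGS := GS_adjacent (c := c) hv hw hvw hadj
        have : (0:ℤ) ≤ ((s.filter (fun u => v < u ∧ u < w)).card : ℤ) := Int.ofNat_nonneg _
        rw [ht]
        simp only
        rw [hGS]
        push_cast
        omega

end TwoEmb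

section EmbB
variable {Vb : Type} [Fintype Vb]

lemma embB (E : Finset Vb) (m : Vb → ℤ) (em : {x // x ∈ E} → ℤ)
    (H : ∀ x y : {x // x ∈ E},
      (gapFun (Fintype.card Vb - 1) em x : ℤ) - gapFun (Fintype.card Vb - 1) em y
      = (gapFun (Fintype.card Vb - 1) m x.val : ℤ) - gapFun (Fintype.card Vb - 1) m y.val) :
    ∃ m' : Vb → ℤ,
      (∀ x y : Vb, m' x ≤ m' y ↔ m x ≤ m y) ∧ (∀ e : {x // x ∈ E}, m' e.val = em e) := by
  classical
  rcases le_or_gt (Fintype.card Vb) 1 with hcard | hcard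
  · have hss : Subsingleton Vb := Fintype.card_le_one_iff_subsingleton.1 hcard
    refine ⟨fun b => if hb : b ∈ E then em ⟨b, hb⟩ else m b, ?_, ?_⟩
    · intro x y
      have hxy : x = y := Subsingleton.elim x y
      subst hxy
      simp
    · intro e
      simp [e.2]
  · set c := Fintype.card Vb - 1 with hc
    have hc1 : 1 ≤ c := by omega
    have hcE : 1 ≤ Fintype.card {x // x ∈ E} → True := fun _ => trivial
    -- sign transfer between em and m on E
    have hsign : ∀ e f : {x // x ∈ E}, em e < em f ↔ m e.val < m f.val := by
      intro e f
      have hEcard : em e < em f ∨ m e.val < m f.val → 1 ≤ Fintype.card {x // x ∈ E} - 1 := by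
        intro h
        have hef : e ≠ f := by
          rintro rfl
          omega
        have := Fintype.one_lt_card_iff.2 ⟨e, f, hef⟩
        omega
      constructor
      · intro h
        have h1 := (gapFun_lt_iff' (c := c)
          (by have := hEcard (Or.inl h); have : 1 ≤ c := hc1; omega) em e f).2 h
        have := H e f
        have h2 : gapFun c m e.val < gapFun c m f.val := by omega
        exact (gapFun_lt_iff' hc1 m e.val f.val).1 h2
      · intro h
        have h1 := (gapFun_lt_iff' hc1 m e.val f.val).2 h
        have := H e f
        have h2 : gapFun c em e < gapFun c em f := by omega
        exact (gapFun_lt_iff' hc1 em e f).1 h2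
    have hwd : ∀ e f : {x // x ∈ E}, m e.val = m f.val → em e = em f := by
      intro e f h
      have h1 : gapFun c m e.val = gapFun c m f.val := gapFun_eq_of_eq h
      have := H e f
      have h2 : gapFun c em e = gapFun c em f := by omega
      by_contra hcon
      rcases lt_or_gt_of_ne hcon with h' | h'
      · have := (gapFun_lt_iff' hc1 em e f).2 h'
        omega
      · have := (gapFun_lt_iff' hc1 em f e).2 h'
        omega
    set s := Finset.univ.image m with hs
    set EV := E.image m with hEV
    have hsub : EV ⊆ s := by
      intro v hv
      obtain ⟨e, he, rfl⟩ := Finset.mem_image.1 hv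
      exact mem_img m e
    set t : ℤ → ℤ := fun v =>
      if h : ∃ e : {x // x ∈ E}, m e.val = v then em h.choose else v with ht
    have htval : ∀ e : {x // x ∈ E}, t (m e.val) = em e := by
      intro e
      have hex : ∃ f : {x // x ∈ E}, m f.val = m e.val := ⟨e, rfl⟩
      rw [ht]
      simp only [dif_pos hex]
      exact hwd _ _ hex.choose_spec
    -- room
    have hstep : ∀ v ∈ EV, ∀ w ∈ EV, v < w → (∀ u ∈ EV, ¬(v < u ∧ u < w)) →
        ((s.filter (fun u => v < u ∧ u < w)).card : ℤ) + 1 ≤ t w - t v := by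
      intro v hv w hw hvw hadj
      obtain ⟨e0, he0, hev⟩ := Finset.mem_image.1 hv
      obtain ⟨f0, hf0, hfw⟩ := Finset.mem_image.1 hw
      set e : {x // x ∈ E} := ⟨e0, he0⟩
      set f : {x // x ∈ E} := ⟨f0, hf0⟩
      have hme : m e.val = v := hev
      have hmf : m f.val = w := hfw
      have htv : t v = em e := by rw [← hme]; exact htval e
      have htw : t w = em f := by rw [← hmf]; exact htval f
      -- lower bound on gapFun m difference
      have hsplit := GS_split (s := s) (c := c) (le_of_lt hvw)
      have hcard1 : (s.filter (fun u => v ≤ u ∧ u < w)).card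
          = (s.filter (fun u => v < u ∧ u < w)).card + 1 := by
        have : s.filter (fun u => v ≤ u ∧ u < w) = insert v (s.filter (fun u => v < u ∧ u < w)) := by
          ext u
          simp only [Finset.mem_filter, Finset.mem_insert]
          constructor
          · rintro ⟨hu, h1, h2⟩
            rcases eq_or_lt_of_le h1 with rfl | h3
            · exact Or.inl rfl
            · exact Or.inr ⟨hu, h3, h2⟩
          · rintro (rfl | ⟨hu, h1, h2⟩)
            · exact ⟨hsub hv, le_refl _, hvw⟩
            · exact ⟨hu, le_of_lt h1, h2⟩
        have hnm : v ∉ s.filter (fun u => v < u ∧ u < w) := by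
          simp only [Finset.mem_filter]
          push_neg
          intro _ h
          omega
        rw [this, Finset.card_insert_of_notMem hnm]
      have hterm : ∀ u ∈ s.filter (fun x => v ≤ x ∧ x < w), 1 ≤ min ((nx s u - u).toNat) c := by
        intro u hu
        simp only [Finset.mem_filter] at hu
        obtain ⟨_, h2, _⟩ := nx_spec (hsub hw) hu.2.2
        omega
      have hsum := Finset.card_nsmul_le_sum _ _ 1 hterm
      simp only [smul_eq_mul, mul_one] at hsum
      have hlow : (s.filter (fun u => v < u ∧ u < w)).card + 1 ≤ GS s c w - GS s c v := by
        rw [hsplit]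
        omega
      -- gapFun em difference equals min (em f - em e) c
      have hemlt : em e < em f := (hsign e f).2 (by omega)
      have hemadj : ∀ u ∈ Finset.univ.image em, ¬(em e < u ∧ u < em f) := by
        intro u hu hcon
        obtain ⟨g, _, rfl⟩ := Finset.mem_image.1 hu
        have h1 : m e.val < m g.val := (hsign e g).1 hcon.1
        have h2 : m g.val < m f.val := (hsign g f).1 hcon.2
        have : m g.val ∈ EV := Finset.mem_image.2 ⟨g.val, g.2, rfl⟩
        exact hadj _ this (by omega)
      have hGSem : GS (Finset.univ.image em) c (em f)
          = GS (Finset.univ.image em) c (em e) + min (em f - em e).toNat c := by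
        have := GS_split (s := Finset.univ.image em) (c := c) (le_of_lt hemlt)
        rw [this]
        congr 1
        have hfe : (Finset.univ.image em).filter (fun u => em e ≤ u ∧ u < em f)
            = {em e} := by
          ext u
          simp only [Finset.mem_filter, Finset.mem_singleton]
          constructor
          · rintro ⟨hu, h1, h2⟩
            have := hemadj u hu
            omega
          · rintro rfl
            exact ⟨mem_img em e, le_refl _, hemlt⟩
        rw [hfe, Finset.sum_singleton, nx_eq (mem_img em f) hemlt hemadj]
      -- combine through H
      have hlow2 : (gapFun c m e.val) + ((s.filter (fun u => v < u ∧ u < w)).card + 1)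
          ≤ gapFun c m f.val := by
        rw [gapFun_GS, gapFun_GS, hme, hmf, ← hs, hsplit]
        omega
      have hGSem' : gapFun c em f = gapFun c em e + min (em f - em e).toNat c := by
        rw [gapFun_GS, gapFun_GS]
        exact hGSem
      obtain ⟨M, hM⟩ : ∃ M, min (em f - em e).toNat c = M := ⟨_, rfl⟩
      rw [hM] at hGSem'
      have h1 : M ≤ (em f - em e).toNat := by rw [← hM]; exact min_le_left _ _
      have hH' := H f e
      rw [htv, htw]
      omega
    have hroom : Room s EV t := room_of_adjacent hsub t hstep
    refine ⟨fun v => Aemb s EV t (m v), ?_, ?_⟩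
    · intro x y
      exact Aemb_le_iff hsub hroom (mem_img m x) (mem_img m y)
    · intro e
      have he : m e.val ∈ EV := Finset.mem_image.2 ⟨e.val, e.2, rfl⟩
      show Aemb s EV t (m e.val) = em e
      rw [Aemb_mem_EV hsub he]
      exact htval e

end EmbB

section Bridge

variable {Va Vb : Type} [Fintype Vb]

lemma mu_congr (k i : ℕ) (σ σ' : ℕ → Va ⊕ Vb → ℤ) (h : ∀ j ≤ i, σ j = σ' j) :
    mu k σ i = mu k σ' i := by
  have harg : ∀ l, l ≤ min i k → σ (i - min i k + l) = σ' (i - min i k + l) := by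
    intro l hl
    apply h
    omega
  unfold mu
  refine Prod.ext ?_ ?_
  · funext t1 t2
    dsimp only
    rw [harg _ (min_le_right _ _), harg _ (min_le_right _ _)]
  · funext j
    dsimp only
    rw [harg _ (min_le_right _ _)]

lemma ssat_mu_iff (k : ℕ) (σ : ℕ → Va ⊕ Vb → ℤ) :
    ∀ ψ : CLTL Va Vb, xlen ψ ≤ k → ∀ d, (ssat (mu k σ) (k + d) ψ ↔ csat σ d ψ) := by
  intro ψ
  induction ψ with
  | ltL i1 x j1 y =>
    intro hx d
    have h1 : min (k + d) k = k := by omega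
    have h2 : min i1 k = i1 := by simp only [xlen] at hx; omega
    have h3 : min j1 k = j1 := by simp only [xlen] at hx; omega
    simp only [ssat, csat, mu, h1, h2, h3]
    have e1 : k + d - k + i1 = d + i1 := by omega
    have e2 : k + d - k + j1 = d + j1 := by omega
    rw [e1, e2]
    constructor
    · rintro ⟨hle, hnle⟩
      omega
    · intro h
      constructor <;> omega
  | eqL i1 x j1 y =>
    intro hx d
    have h1 : min (k + d) k = k := by omega
    have h2 : min i1 k = i1 := by simp only [xlen] at hx; omega
    have h3 : min j1 k = j1 := by simp only [xlen] at hx; omega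
    simp only [ssat, csat, mu, h1, h2, h3]
    have e1 : k + d - k + i1 = d + i1 := by omega
    have e2 : k + d - k + j1 = d + j1 := by omega
    rw [e1, e2]
    constructor
    · rintro ⟨hle, hge⟩
      omega
    · intro h
      constructor <;> omega
  | ltB x y =>
    intro hx d
    have h1 : min (k + d) k = k := by omega
    have h2 : min 0 k = 0 := by omega
    simp only [ssat, csat, mu, h1, h2]
    have e1 : k + d - k + 0 = d := by omega
    rw [e1]
    exact gapFun_lt_iff (fun b => σ d (Sum.inr b)) x y
  | eqB x y =>
    intro hx d
    have h1 : min (k + d) k = k := by omega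
    have h2 : min 0 k = 0 := by omega
    simp only [ssat, csat, mu, h1, h2]
    have e1 : k + d - k + 0 = d := by omega
    rw [e1]
    exact gapFun_eq_iff (fun b => σ d (Sum.inr b)) x y
  | not ψ ih =>
    intro hx d
    simp only [ssat, csat]
    rw [ih hx d]
  | or ψ1 ψ2 ih1 ih2 =>
    intro hx d
    simp only [xlen] at hx
    simp only [ssat, csat]
    rw [ih1 (by omega) d, ih2 (by omega) d]
  | next ψ ih =>
    intro hx d
    simp only [ssat, csat]
    have e1 : k + d + 1 = k + (d + 1) := by omega
    rw [e1, ih hx (d + 1)]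
  | untl ψ1 ψ2 ih1 ih2 =>
    intro hx d
    simp only [xlen] at hx
    simp only [ssat, csat]
    constructor
    · rintro ⟨j, hj, h2, h1⟩
      refine ⟨j - k, by omega, ?_, ?_⟩
      · have := (ih2 (by omega) (j - k)).1
        apply this
        have : k + (j - k) = j := by omega
        rw [this]
        exact h2
      · intro l hl1 hl2
        have := (ih1 (by omega) l).1 (h1 (k + l) (by omega) (by omega))
        exact this
    · rintro ⟨j, hj, h2, h1⟩
      refine ⟨k + j, by omega, (ih2 (by omega) j).2 h2, ?_⟩
      intro l hl1 hl2
      have hlk : l = k + (l - k) := by omega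
      rw [hlk]
      exact (ih1 (by omega) (l - k)).2 (h1 (l - k) (by omega) (by omega))

lemma csat_congr (σ σ' : ℕ → Va ⊕ Vb → ℤ)
    (hinl : ∀ i a, σ i (Sum.inl a) = σ' i (Sum.inl a))
    (hinr : ∀ i x y, σ i (Sum.inr x) ≤ σ i (Sum.inr y) ↔ σ' i (Sum.inr x) ≤ σ' i (Sum.inr y)) :
    ∀ (ψ : CLTL Va Vb) i, csat σ i ψ ↔ csat σ' i ψ := by
  intro ψ
  induction ψ with
  | ltL i1 x j1 y =>
    intro i
    simp only [csat, hinl]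
  | eqL i1 x j1 y =>
    intro i
    simp only [csat, hinl]
  | ltB x y =>
    intro i
    simp only [csat]
    rw [lt_iff_not_ge, lt_iff_not_ge, hinr i y x]
  | eqB x y =>
    intro i
    simp only [csat]
    rw [le_antisymm_iff, le_antisymm_iff, hinr i x y, hinr i y x]
  | not ψ ih => intro i; simp only [csat]; rw [ih i]
  | or ψ1 ψ2 ih1 ih2 => intro i; simp only [csat]; rw [ih1 i, ih2 i]
  | next ψ ih => intro i; simp only [csat]; rw [ih (i+1)]
  | untl ψ1 ψ2 ih1 ih2 =>
    intro i
    simp only [csat]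
    constructor
    · rintro ⟨j, h1, h2, h3⟩
      exact ⟨j, h1, (ih2 j).1 h2, fun l hl1 hl2 => (ih1 l).1 (h3 l hl1 hl2)⟩
    · rintro ⟨j, h1, h2, h3⟩
      exact ⟨j, h1, (ih2 j).2 h2, fun l hl1 hl2 => (ih1 l).2 (h3 l hl1 hl2)⟩

lemma ssat_congr (k : ℕ) (ρ ρ' : ℕ → FrameData Va Vb)
    (hag : ∀ i, (∀ t1 t2 : ℕ × Va, t1.1 < k + 1 → t2.1 < k + 1 →
        ((ρ (k + i)).1 t1 t2 ↔ (ρ' (k + i)).1 t1 t2)) ∧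
      (∀ j < k + 1, (ρ (k + i)).2 j = (ρ' (k + i)).2 j)) :
    ∀ ψ : CLTL Va Vb, xlen ψ ≤ k → ∀ i, (ssat ρ (k + i) ψ ↔ ssat ρ' (k + i) ψ) := by
  intro ψ
  induction ψ with
  | ltL i1 x j1 y =>
    intro hx i
    simp only [xlen] at hx
    simp only [ssat]
    rw [(hag i).1 (i1, x) (j1, y) (by simp; omega) (by simp; omega),
      (hag i).1 (j1, y) (i1, x) (by simp; omega) (by simp; omega)]
  | eqL i1 x j1 y =>
    intro hx i
    simp only [xlen] at hx
    simp only [ssat]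
    rw [(hag i).1 (i1, x) (j1, y) (by simp; omega) (by simp; omega),
      (hag i).1 (j1, y) (i1, x) (by simp; omega) (by simp; omega)]
  | ltB x y =>
    intro hx i
    simp only [ssat]
    rw [(hag i).2 0 (by omega)]
  | eqB x y =>
    intro hx i
    simp only [ssat]
    rw [(hag i).2 0 (by omega)]
  | not ψ ih => intro hx i; simp only [ssat]; rw [ih hx i]
  | or ψ1 ψ2 ih1 ih2 =>
    intro hx i
    simp only [xlen] at hx
    simp only [ssat]
    rw [ih1 (by omega) i, ih2 (by omega) i]
  | next ψ ih =>
    intro hx i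
    simp only [ssat]
    have e1 : k + i + 1 = k + (i + 1) := by omega
    rw [e1, ih hx (i + 1)]
  | untl ψ1 ψ2 ih1 ih2 =>
    intro hx i
    simp only [xlen] at hx
    simp only [ssat]
    constructor
    · rintro ⟨j, h1, h2, h3⟩
      refine ⟨j, h1, ?_, ?_⟩
      · have hj : j = k + (j - k) := by omega
        rw [hj] at h2 ⊢
        exact (ih2 (by omega) (j - k)).1 h2
      · intro l hl1 hl2
        have h4 := h3 l hl1 hl2
        have h5 : ssat ρ (k + (l - k)) ψ1 := by
          rwa [show k + (l - k) = l from by omega]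
        have h6 := (ih1 (by omega) (l - k)).1 h5
        rwa [show k + (l - k) = l from by omega] at h6
    · rintro ⟨j, h1, h2, h3⟩
      refine ⟨j, h1, ?_, ?_⟩
      · have hj : j = k + (j - k) := by omega
        rw [hj] at h2 ⊢
        exact (ih2 (by omega) (j - k)).2 h2
      · intro l hl1 hl2
        have h4 := h3 l hl1 hl2
        have h5 : ssat ρ' (k + (l - k)) ψ1 := by
          rwa [show k + (l - k) = l from by omega]
        have h6 := (ih1 (by omega) (l - k)).2 h5
        rwa [show k + (l - k) = l from by omega] at h6

lemma pathNodes_length {α : Type} (π : ℕ → α) (i : ℕ) : (pathNodes π i).length = i + 1 := by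
  simp [pathNodes]

lemma pathNodes_zero {α : Type} (π : ℕ → α) : pathNodes π 0 = [π 0] := by
  simp [pathNodes, List.ofFn_succ]

lemma pathNodes_succ {α : Type} (π : ℕ → α) (i : ℕ) :
    pathNodes π (i + 1) = pathNodes π i ++ [π (i + 1)] := by
  unfold pathNodes
  rw [List.ofFn_succ' (fun j : Fin (i + 2) => π j.val), List.concat_eq_append]
  simp

lemma pathNodes_take {α : Type} (π : ℕ → α) (i j : ℕ) (h : j ≤ i) :
    (pathNodes π i).take (j + 1) = pathNodes π j := by
  apply List.ext_getElem
  · rw [List.length_take, pathNodes_length, pathNodes_length]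
    omega
  · intro n h1 h2
    rw [List.getElem_take]
    simp only [pathNodes, List.getElem_ofFn]

end Bridge

section ForwardDir

variable {Va Vb : Type} [Fintype Vb]

noncomputable def repEm {E : Finset Vb} (g : GapFuns Vb E) : {x // x ∈ E} → ℤ :=
  g.2.choose

lemma repEm_spec {E : Finset Vb} (g : GapFuns Vb E) :
    g.val = gapFun (Fintype.card Vb - 1) (repEm g) := g.2.choose_spec

noncomputable def playH (E : Finset Vb) (st : Strat Va Vb E)
    (η : List (GapFuns Vb E)) : List (Va ⊕ Vb → ℤ) :=
  η.foldl (fun h g => h ++ [st h (repEm g)]) []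

lemma playH_append (E : Finset Vb) (st : Strat Va Vb E) (η : List (GapFuns Vb E))
    (g : GapFuns Vb E) :
    playH E st (η ++ [g]) = playH E st η ++ [st (playH E st η) (repEm g)] := by
  unfold playH
  rw [List.foldl_append]
  rfl

noncomputable def L0 (E : Finset Vb) (st : Strat Va Vb E) (η : List (GapFuns Vb E)) :
    Va ⊕ Vb → ℤ :=
  (playH E st η).getLastD (fun _ => 0)

lemma L0_append (E : Finset Vb) (st : Strat Va Vb E) (η : List (GapFuns Vb E))
    (g : GapFuns Vb E) :
    L0 E st (η ++ [g]) = st (playH E st η) (repEm g) := by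
  unfold L0
  rw [playH_append]
  simp [List.getLastD_concat]

/-- squash a valuation through the `embA` re-embedding on the future-blind part -/
noncomputable def sqA (E : Finset Vb) (f : Va ⊕ Vb → ℤ) : Va ⊕ Vb → ℤ := fun v =>
  match v with
  | Sum.inl a => f (Sum.inl a)
  | Sum.inr b => (embA E (fun b' => f (Sum.inr b'))).choose b

lemma sqA_inl (E : Finset Vb) (f : Va ⊕ Vb → ℤ) (a : Va) :
    sqA E f (Sum.inl a) = f (Sum.inl a) := rfl

lemma sqA_le_iff (E : Finset Vb) (f : Va ⊕ Vb → ℤ) (b b' : Vb) :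
    sqA E f (Sum.inr b) ≤ sqA E f (Sum.inr b') ↔ f (Sum.inr b) ≤ f (Sum.inr b') :=
  (embA E (fun b' => f (Sum.inr b'))).choose_spec.1 b b'

lemma sqA_gapdiff (E : Finset Vb) (f : Va ⊕ Vb → ℤ) (x y : {x // x ∈ E}) :
    (gapFun (Fintype.card Vb - 1) (fun b => sqA E f (Sum.inr b)) x.val : ℤ)
      - gapFun (Fintype.card Vb - 1) (fun b => sqA E f (Sum.inr b)) y.val
    = (gapFun (Fintype.card Vb - 1) (fun e : {x // x ∈ E} => f (Sum.inr e.val)) x : ℤ)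
      - gapFun (Fintype.card Vb - 1) (fun e : {x // x ∈ E} => f (Sum.inr e.val)) y :=
  (embA E (fun b' => f (Sum.inr b'))).choose_spec.2 x y

noncomputable def Ldef (E : Finset Vb) (st : Strat Va Vb E) (η : List (GapFuns Vb E)) :
    Va ⊕ Vb → ℤ :=
  sqA E (L0 E st η)

noncomputable def Tdef (E : Finset Vb) (st : Strat Va Vb E) (k : ℕ)
    (η : List (GapFuns Vb E)) : FrameData Va Vb :=
  mu k (fun j => Ldef E st (η.take (j + 1))) (η.length - 1)

lemma mu_onestep (k i : ℕ) (σ : ℕ → Va ⊕ Vb → ℤ) :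
    OneStepT k (min (i + 1) (k + 1)) (mu k σ i) (mu k σ (i + 1)) := by
  unfold OneStepT mu
  by_cases h : min (i + 1) (k + 1) < k + 1
  · rw [if_pos h]
    have hik : i < k := by omega
    have e1 : ∀ a, a < i + 1 → i - min i k + min a (min i k) = a := by intro a ha; omega
    have e2 : ∀ a, a < i + 2 → (i + 1) - min (i + 1) k + min a (min (i + 1) k) = a := by
      intro a ha; omega
    constructor
    · intro t1 t2 h1 h2
      dsimp only
      rw [e1 t1.1 (by omega), e1 t2.1 (by omega), e2 t1.1 (by omega), e2 t2.1 (by omega)]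
    · intro j hj
      dsimp only
      rw [e1 j (by omega), e2 j (by omega)]
  · rw [if_neg h]
    have hik : k ≤ i := by omega
    have e1 : ∀ a, a < k + 1 → i - min i k + min a k = i - k + a := by intro a ha; omega
    have e2 : ∀ a, a < k + 1 → (i + 1) - min (i + 1) k + min a k = i + 1 - k + a := by
      intro a ha; omega
    have e3 : ∀ a, a < k + 1 → i - k + (a + 1) = i + 1 - k + a := by intro a ha; omega
    constructor
    · intro t1 t2 h1 h2
      dsimp only
      have hm : min i k = k := by omega
      have hm2 : min (i + 1) k = k := by omega
      rw [hm, hm2]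
      rw [show min (t1.1 + 1) k = t1.1 + 1 from by omega,
        show min (t2.1 + 1) k = t2.1 + 1 from by omega,
        show min t1.1 k = t1.1 from by omega,
        show min t2.1 k = t2.1 from by omega]
      rw [show i - k + (t1.1 + 1) = i + 1 - k + t1.1 from by omega,
        show i - k + (t2.1 + 1) = i + 1 - k + t2.1 from by omega]
    · intro j hj
      dsimp only
      have hm : min i k = k := by omega
      have hm2 : min (i + 1) k = k := by omega
      rw [hm, hm2]
      rw [show min (j + 1) k = j + 1 from by omega, show min j k = j from by omega]
      rw [show i - k + (j + 1) = i + 1 - k + j from by omega]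

lemma Tdef_path (E : Finset Vb) (st : Strat Va Vb E) (k : ℕ) (π : ℕ → GapFuns Vb E)
    (i : ℕ) :
    Tdef E st k (pathNodes π i) = mu k (fun j => Ldef E st (pathNodes π j)) i := by
  unfold Tdef
  rw [pathNodes_length]
  have : i + 1 - 1 = i := by omega
  rw [this]
  apply mu_congr
  intro j hj
  rw [pathNodes_take π i j hj]

lemma playH_nodes (E : Finset Vb) (st : Strat Va Vb E) (π : ℕ → GapFuns Vb E) :
    ∀ i, playH E st (pathNodes π i)
      = List.ofFn (fun j : Fin (i + 1) => L0 E st (pathNodes π j.val)) := by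
  intro i
  induction i with
  | zero =>
    rw [pathNodes_zero, show [π 0] = [] ++ [π 0] from rfl, playH_append]
    have : L0 E st (pathNodes π 0) = st (playH E st []) (repEm (π 0)) := by
      rw [pathNodes_zero, show [π 0] = [] ++ [π 0] from rfl, L0_append]
    rw [List.ofFn_succ]
    simp only [Fin.val_zero]
    rw [this]
    rfl
  | succ i ih =>
    rw [pathNodes_succ, playH_append, ih]
    have hlast : L0 E st (pathNodes π (i + 1)) = st (playH E st (pathNodes π i)) (repEm (π (i + 1))) := by
      rw [pathNodes_succ, L0_append]
    rw [List.ofFn_succ' (fun j : Fin (i + 2) => L0 E st (pathNodes π j.val)),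
      List.concat_eq_append]
    simp only [Fin.coe_castSucc, Fin.val_last]
    rw [hlast, ih]

lemma conforms_play (E : Finset Vb) (st : Strat Va Vb E) (hf : EnvFaithful E st)
    (π : ℕ → GapFuns Vb E) :
    Conforms E st (fun i => L0 E st (pathNodes π i)) := by
  intro i
  set σ : ℕ → Va ⊕ Vb → ℤ := fun i => L0 E st (pathNodes π i) with hσ
  have hL0 : ∀ i, σ i = st (playH E st (match i with | 0 => [] | (i+1) => pathNodes π i))
      (repEm (π i)) := by
    intro i
    match i with
    | 0 =>
      show L0 E st (pathNodes π 0) = _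
      rw [pathNodes_zero, show [π 0] = [] ++ [π 0] from rfl, L0_append]
    | (i+1) =>
      show L0 E st (pathNodes π (i+1)) = _
      rw [pathNodes_succ, L0_append]
  have hhist : (List.ofFn fun j : Fin i => σ j.val)
      = playH E st (match i with | 0 => [] | (i+1) => pathNodes π i) := by
    match i with
    | 0 => rfl
    | (i+1) =>
      rw [playH_nodes]
  have hem : (fun e : {x // x ∈ E} => σ i (Sum.inr e.val)) = repEm (π i) := by
    funext e
    rw [hL0 i]
    exact hf _ _ e.val e.2
  rw [hhist, hem]
  exact hL0 i

lemma forward_dir (E : Finset Vb) (φ : CLTL Va Vb) (k : ℕ) (hk : xlen φ ≤ k)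
    (st : Strat Va Vb E) (hf : EnvFaithful E st)
    (hw : ∀ σ : ℕ → Va ⊕ Vb → ℤ, Conforms E st σ → csat σ 0 φ) :
    ∃ (T : List (GapFuns Vb E) → FrameData Va Vb)
      (L : List (GapFuns Vb E) → (Va ⊕ Vb → ℤ)),
      WinningStrategyTree E k φ T L := by
  refine ⟨Tdef E st k, Ldef E st, ?_, ?_⟩
  · -- StrategyTree
    intro η
    refine ⟨⟨?_, ?_, ?_⟩, ?_⟩
    · intro t1 t2 _ _
      exact le_total _ _
    · intro t1 t2 t3 _ _ _ h1 h2
      exact le_trans h1 h2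
    · intro j _
      exact ⟨_, rfl⟩
    · intro g
      constructor
      · -- OneStepT
        match hη : η with
        | [] =>
          unfold OneStepT
          rw [if_pos (by unfold nsize; simp)]
          constructor
          · intro t1 t2 h1 h2
            unfold nsize at h1
            simp at h1
          · intro j hj
            unfold nsize at hj
            simp at hj
        | (g0 :: η0) =>
          have hlen : (g0 :: η0).length = η0.length + 1 := rfl
          have hT1 : Tdef E st k (g0 :: η0)
              = mu k (fun j => Ldef E st (((g0 :: η0) ++ [g]).take (j + 1))) η0.length := by
            unfold Tdef
            rw [hlen]
            have : η0.length + 1 - 1 = η0.length := by omega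
            rw [this]
            apply mu_congr
            intro j hj
            rw [List.take_append_of_le_length (by rw [hlen]; omega)]
          have hT2 : Tdef E st k ((g0 :: η0) ++ [g])
              = mu k (fun j => Ldef E st (((g0 :: η0) ++ [g]).take (j + 1)))
                  (η0.length + 1) := by
            unfold Tdef
            simp only [List.length_append, hlen, List.length_singleton]
            rfl
          rw [hT1, hT2]
          have hns : nsize k (g0 :: η0) = min (η0.length + 1) (k + 1) := by
            unfold nsize
            rw [hlen]
          rw [hns]
          exact mu_onestep k η0.length _
      · -- GapCompat
        have hlen : (η ++ [g]).length = η.length + 1 := by simp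
        have hs : nsize k (η ++ [g]) = min (η.length + 1) (k + 1) := by
          unfold nsize
          rw [hlen]
        have hTc : Tdef E st k (η ++ [g])
            = mu k (fun j => Ldef E st ((η ++ [g]).take (j + 1))) η.length := by
          unfold Tdef
          rw [hlen]
          have : η.length + 1 - 1 = η.length := by omega
          rw [this]
        intro x y
        rw [hs, hTc]
        set l := η.length with hl
        have hidx : min (l + 1) (k + 1) - 1 = min l k := by omega
        rw [hidx]
        unfold mu
        dsimp only
        have e1 : l - min l k + min (min l k) (min l k) = l := by omega
        rw [e1]
        have htake : (η ++ [g]).take (l + 1) = η ++ [g] := by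
          rw [hl]
          rw [← hlen]
          exact List.take_length
        rw [htake]
        -- now expressed via Ldef (η ++ [g])
        have hemb := sqA_gapdiff E (L0 E st (η ++ [g])) x y
        have hE : (fun e : {x // x ∈ E} => L0 E st (η ++ [g]) (Sum.inr e.val)) = repEm g := by
          funext e
          rw [L0_append]
          exact hf _ _ e.val e.2
        have hval : ∀ z : {x // x ∈ E},
            gapFun (Fintype.card Vb - 1)
              (fun e : {x // x ∈ E} => L0 E st (η ++ [g]) (Sum.inr e.val)) z = g.val z := by
          intro z
          rw [hE, repEm_spec]
        rw [show (g.val x : ℤ) = ((gapFun (Fintype.card Vb - 1)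
            (fun e : {x // x ∈ E} => L0 E st (η ++ [g]) (Sum.inr e.val)) x : ℕ) : ℤ) from by
          rw [hval x],
          show (g.val y : ℤ) = ((gapFun (Fintype.card Vb - 1)
            (fun e : {x // x ∈ E} => L0 E st (η ++ [g]) (Sum.inr e.val)) y : ℕ) : ℤ) from by
          rw [hval y]]
        exact hemb.symm
  · -- winning condition along paths
    intro π
    have hTpath : ∀ i, Tdef E st k (pathNodes π i)
        = mu k (fun j => Ldef E st (pathNodes π j)) i := Tdef_path E st k π
    constructor
    · intro i
      rw [hTpath i]
      exact ⟨fun t1 t2 _ _ => Iff.rfl, fun j _ => rfl⟩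
    · have hfun : (fun i => Tdef E st k (pathNodes π i))
          = fun i => mu k (fun j => Ldef E st (pathNodes π j)) i := funext hTpath
      rw [hfun]
      set σr : ℕ → Va ⊕ Vb → ℤ := fun i => L0 E st (pathNodes π i) with hσr
      have hcs : csat σr 0 φ := hw σr (conforms_play E st hf π)
      have hLr : (fun j => Ldef E st (pathNodes π j)) = fun j => sqA E (σr j) := rfl
      rw [hLr]
      have hiff := csat_congr σr (fun j => sqA E (σr j)) (fun i a => rfl)
        (fun i b b' => (sqA_le_iff E (σr i) b b').symm) φ 0
      have hcs' : csat (fun j => sqA E (σr j)) 0 φ := hiff.1 hcs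
      have := (ssat_mu_iff k (fun j => sqA E (σr j)) φ hk 0).2 hcs'
      rwa [Nat.add_zero] at this

end ForwardDir

section BackwardDir

variable {Va Vb : Type} [Fintype Vb]

noncomputable def gKey (E : Finset Vb) (em : {x // x ∈ E} → ℤ) : GapFuns Vb E :=
  ⟨gapFun (Fintype.card Vb - 1) em, em, rfl⟩

noncomputable def nodeOf (E : Finset Vb) (h : List (Va ⊕ Vb → ℤ))
    (em : {x // x ∈ E} → ℤ) : List (GapFuns Vb E) :=
  (h.map (fun f => gKey E (fun e => f (Sum.inr e.val)))) ++ [gKey E em]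

open Classical in
noncomputable def stEmb (E : Finset Vb) (m : Vb → ℤ) (em : {x // x ∈ E} → ℤ) : Vb → ℤ :=
  if H : ∀ x y : {x // x ∈ E},
      (gapFun (Fintype.card Vb - 1) em x : ℤ) - gapFun (Fintype.card Vb - 1) em y
      = (gapFun (Fintype.card Vb - 1) m x.val : ℤ) - gapFun (Fintype.card Vb - 1) m y.val then
    (embB E m em H).choose
  else m

open Classical in
noncomputable def stDef (E : Finset Vb) (L : List (GapFuns Vb E) → (Va ⊕ Vb → ℤ)) :
    Strat Va Vb E := fun h em => fun v =>
  match v with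
  | Sum.inl a => L (nodeOf E h em) (Sum.inl a)
  | Sum.inr b =>
      if hb : b ∈ E then em ⟨b, hb⟩
      else stEmb E (fun b' => L (nodeOf E h em) (Sum.inr b')) em b

lemma stDef_faithful (E : Finset Vb) (L : List (GapFuns Vb E) → (Va ⊕ Vb → ℤ)) :
    EnvFaithful E (stDef E L) := by
  classical
  intro h em x hx
  show (if hb : x ∈ E then em ⟨x, hb⟩ else _) = em ⟨x, hx⟩
  rw [dif_pos hx]

lemma backward_dir (E : Finset Vb) (φ : CLTL Va Vb) (k : ℕ) (hk : xlen φ ≤ k)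
    (T : List (GapFuns Vb E) → FrameData Va Vb)
    (L : List (GapFuns Vb E) → (Va ⊕ Vb → ℤ))
    (hwt : WinningStrategyTree E k φ T L) :
    ∃ st : Strat Va Vb E, EnvFaithful E st ∧
      ∀ σ : ℕ → Va ⊕ Vb → ℤ, Conforms E st σ → csat σ 0 φ := by
  classical
  obtain ⟨hstrat, hwin⟩ := hwt
  refine ⟨stDef E L, stDef_faithful E L, ?_⟩
  intro σ hconf
  set π : ℕ → GapFuns Vb E := fun i => gKey E (fun e => σ i (Sum.inr e.val)) with hπ
  have hnode : ∀ i, nodeOf E (List.ofFn fun j : Fin i => σ j.val)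
      (fun e => σ i (Sum.inr e.val)) = pathNodes π i := by
    intro i
    unfold nodeOf
    rw [List.map_ofFn]
    cases i with
    | zero =>
      rw [pathNodes_zero]
      rfl
    | succ i =>
      rw [pathNodes_succ]
      rfl
  have hσst := hconf
  have hinl : ∀ i a, σ i (Sum.inl a) = L (pathNodes π i) (Sum.inl a) := by
    intro i a
    conv_lhs => rw [hσst i]
    show L (nodeOf E (List.ofFn fun j : Fin i => σ j.val)
      (fun e => σ i (Sum.inr e.val))) (Sum.inl a) = _
    rw [hnode i]
  have hGC : ∀ i, GapCompat (π i) (nsize k (pathNodes π i)) (T (pathNodes π i)) := by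
    intro i
    cases i with
    | zero =>
      have h := ((hstrat []).2 (π 0)).2
      rw [pathNodes_zero]
      rwa [List.nil_append] at h
    | succ i =>
      have h := ((hstrat (pathNodes π i)).2 (π (i + 1))).2
      rwa [← pathNodes_succ] at h
  obtain ⟨hagree, hssat⟩ := hwin π
  have hH : ∀ i, ∀ x y : {x // x ∈ E},
      (gapFun (Fintype.card Vb - 1) (fun e : {x // x ∈ E} => σ i (Sum.inr e.val)) x : ℤ)
        - gapFun (Fintype.card Vb - 1) (fun e : {x // x ∈ E} => σ i (Sum.inr e.val)) y
      = (gapFun (Fintype.card Vb - 1) (fun b => L (pathNodes π i) (Sum.inr b)) x.val : ℤ)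
        - gapFun (Fintype.card Vb - 1) (fun b => L (pathNodes π i) (Sum.inr b)) y.val := by
    intro i x y
    have h1 := hGC i x y
    have hns : nsize k (pathNodes π i) = min (i + 1) (k + 1) := by
      unfold nsize
      rw [pathNodes_length]
    rw [hns, show min (i + 1) (k + 1) - 1 = min i k from by omega] at h1
    have h2 := (hagree i).2 (min i k) (by omega)
    rw [h2] at h1
    unfold mu at h1
    dsimp only at h1
    rw [show i - min i k + min (min i k) (min i k) = i from by omega] at h1
    exact h1
  have hm' : ∀ i b, σ i (Sum.inr b)
      = (embB E (fun b' => L (pathNodes π i) (Sum.inr b'))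
          (fun e => σ i (Sum.inr e.val)) (hH i)).choose b := by
    intro i b
    by_cases hb : b ∈ E
    · have h2 := (embB E (fun b' => L (pathNodes π i) (Sum.inr b'))
        (fun e => σ i (Sum.inr e.val)) (hH i)).choose_spec.2 ⟨b, hb⟩
      rw [h2]
    · conv_lhs => rw [hσst i]
      show (if hb' : b ∈ E then (fun e : {x // x ∈ E} => σ i (Sum.inr e.val)) ⟨b, hb'⟩
        else stEmb E (fun b' => L (nodeOf E (List.ofFn fun j : Fin i => σ j.val)
          (fun e => σ i (Sum.inr e.val))) (Sum.inr b'))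
          (fun e => σ i (Sum.inr e.val)) b) = _
      rw [dif_neg hb, hnode i]
      unfold stEmb
      rw [dif_pos (hH i)]
  have hinr : ∀ i b b', σ i (Sum.inr b) ≤ σ i (Sum.inr b')
      ↔ L (pathNodes π i) (Sum.inr b) ≤ L (pathNodes π i) (Sum.inr b') := by
    intro i b b'
    rw [hm' i b, hm' i b']
    exact (embB E (fun b' => L (pathNodes π i) (Sum.inr b'))
      (fun e => σ i (Sum.inr e.val)) (hH i)).choose_spec.1 b b'
  have hssat' : ssat (fun i => mu k (fun j => L (pathNodes π j)) i) k φ := by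
    have hcong := ssat_congr k (fun i => T (pathNodes π i))
      (fun i => mu k (fun j => L (pathNodes π j)) i) ?_ φ hk 0
    · rw [Nat.add_zero] at hcong
      exact hcong.1 hssat
    · intro i
      have h := hagree (k + i)
      rw [show min (k + i + 1) (k + 1) = k + 1 from by omega] at h
      exact ⟨h.1, h.2⟩
  have hcsL : csat (fun j => L (pathNodes π j)) 0 φ := by
    have h := ssat_mu_iff k (fun j => L (pathNodes π j)) φ hk 0
    rw [Nat.add_zero] at h
    exact h.1 hssat'
  exact (csat_congr σ (fun j => L (pathNodes π j)) hinl hinr φ 0).2 hcsL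

end BackwardDir

/-- for a single-sided CLTL game over `(ℤ, <, =)` (the environment owns only
future-blind variables `E ⊆ V^b`) with winning condition a CLTL formula `φ` of `X`-length
(at most) `k`, the system has a winning strategy iff there exists a winning strategy tree. -/
theorem stmt8 {Va Vb : Type} [Fintype Vb] (E : Finset Vb)
    (φ : CLTL Va Vb) (k : ℕ) (hk : xlen φ ≤ k) :
    (∃ st : Strat Va Vb E, EnvFaithful E st ∧
        ∀ σ : ℕ → Va ⊕ Vb → ℤ, Conforms E st σ → csat σ 0 φ) ↔
    (∃ (T : List (GapFuns Vb E) → FrameData Va Vb)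
        (L : List (GapFuns Vb E) → (Va ⊕ Vb → ℤ)),
        WinningStrategyTree E k φ T L) := by
  constructor
  · rintro ⟨st, hf, hw⟩
    exact forward_dir E φ k hk st hf hw
  · rintro ⟨T, L, hwt⟩
    exact backward_dir E φ k hk T L hwt
end

section
/- For every strategy tree T, the relation ⊏⁺_T on node variables is transitive and irreflexive; in particular there is no node variable (η, x) with (η, x) ⊏⁺_T (η, x). -/
/-- The relation `⊑_T` on node variables `(η, x)` (node `η`, look-ahead variable `x`) of a
strategy tree `T`: one node is an ancestor of the other, the height difference `h` is at most
`s - 1` where `s` is the size of the frame at the deeper node, and the frame at the deeper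
node orders the corresponding terms (`X^{s-1}` for the deeper node's variable, `X^{s-1-h}`
for the ancestor's variable) accordingly. -/
def sqle {Va Vb : Type} [Fintype Vb] {E : Finset Vb} (k : ℕ)
    (T : List (GapFuns Vb E) → FrameData Va Vb)
    (u v : List (GapFuns Vb E) × Va) : Prop :=
  (u.1 <+: v.1 ∧ v.1.length - u.1.length + 1 ≤ nsize k v.1 ∧
    (T v.1).1 (nsize k v.1 - 1 - (v.1.length - u.1.length), u.2)
      (nsize k v.1 - 1, v.2)) ∨
  (v.1 <+: u.1 ∧ u.1.length - v.1.length + 1 ≤ nsize k u.1 ∧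
    (T u.1).1 (nsize k u.1 - 1, u.2)
      (nsize k u.1 - 1 - (u.1.length - v.1.length), v.2))

/-- The strict relation `⊏_T` induced by `⊑_T`. -/
def sqlt {Va Vb : Type} [Fintype Vb] {E : Finset Vb} (k : ℕ)
    (T : List (GapFuns Vb E) → FrameData Va Vb)
    (u v : List (GapFuns Vb E) × Va) : Prop :=
  sqle k T u v ∧ ¬ sqle k T v u

/-- `T` has bounded chains: for any two node variables `u`, `v` there is a bound `N` such
that every chain `u ⊏⁺ c_1 ⊏⁺ ⋯ ⊏⁺ c_r ⊏⁺ v` has length `r ≤ N`. -/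
def BoundedChains {Va Vb : Type} [Fintype Vb] {E : Finset Vb} (k : ℕ)
    (T : List (GapFuns Vb E) → FrameData Va Vb) : Prop :=
  ∀ u v : List (GapFuns Vb E) × Va, ∃ N : ℕ,
    ∀ l : List (List (GapFuns Vb E) × Va),
      List.Chain (Relation.TransGen (sqlt k T)) u (l ++ [v]) → l.length ≤ N

/-- The node `η` lies on the infinite path `π`. -/
def OnPath {α : Type} (π : ℕ → α) (η : List α) : Prop :=
  η = List.ofFn fun j : Fin η.length => π j.val

/-- The subtree of `T` rooted at `η`. -/
def Subtree {Va Vb : Type} [Fintype Vb] {E : Finset Vb}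
    (T : List (GapFuns Vb E) → FrameData Va Vb) (η : List (GapFuns Vb E)) :
    List (GapFuns Vb E) → FrameData Va Vb :=
  fun η' => T (η ++ η')

/-- `T` is regular: it has only finitely many distinct subtrees. -/
def RegularTree {Va Vb : Type} [Fintype Vb] {E : Finset Vb}
    (T : List (GapFuns Vb E) → FrameData Va Vb) : Prop :=
  {S : List (GapFuns Vb E) → FrameData Va Vb | ∃ η, S = Subtree T η}.Finite

/-- There is an infinite forward chain along the infinite path `π`: infinite sequences of
node variables `(η_i, x)` and `(η_i', y)` on `π`, each sequence descending in the tree, with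
`(η_i, x) ⊏⁺ (η_{i+1}, x)`, `(η_i, x) ⊑ (η_i', y)` and `(η_{i+1}', y) ⊏* (η_i', y)` for
all `i`. -/
def FwdChainOn {Va Vb : Type} [Fintype Vb] {E : Finset Vb} (k : ℕ)
    (T : List (GapFuns Vb E) → FrameData Va Vb) (π : ℕ → GapFuns Vb E) : Prop :=
  ∃ (x y : Va) (a b : ℕ → List (GapFuns Vb E)),
    (∀ i, OnPath π (a i)) ∧ (∀ i, OnPath π (b i)) ∧
    (∀ i, a i <+: a (i + 1)) ∧ (∀ i, b i <+: b (i + 1)) ∧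
    (∀ i, Relation.TransGen (sqlt k T) (a i, x) (a (i + 1), x)) ∧
    (∀ i, sqle k T (a i, x) (b i, y)) ∧
    (∀ i, Relation.ReflTransGen (sqlt k T) (b (i + 1), y) (b i, y))

/-- There is an infinite backward chain along the infinite path `π`: dually to
`FwdChainOn`, with `(η_{i+1}, x) ⊏⁺ (η_i, x)`, `(η_i', y) ⊑ (η_i, x)` and
`(η_i', y) ⊏* (η_{i+1}', y)` for all `i`. -/
def BwdChainOn {Va Vb : Type} [Fintype Vb] {E : Finset Vb} (k : ℕ)
    (T : List (GapFuns Vb E) → FrameData Va Vb) (π : ℕ → GapFuns Vb E) : Prop :=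
  ∃ (x y : Va) (a b : ℕ → List (GapFuns Vb E)),
    (∀ i, OnPath π (a i)) ∧ (∀ i, OnPath π (b i)) ∧
    (∀ i, a i <+: a (i + 1)) ∧ (∀ i, b i <+: b (i + 1)) ∧
    (∀ i, Relation.TransGen (sqlt k T) (a (i + 1), x) (a i, x)) ∧
    (∀ i, sqle k T (b i, y) (a i, x)) ∧
    (∀ i, Relation.ReflTransGen (sqlt k T) (b i, y) (b (i + 1), y))

/-! ### Auxiliary development -/

section Aux

variable {Va Vb : Type} [Fintype Vb] {E : Finset Vb} {k : ℕ}
  {T : List (GapFuns Vb E) → FrameData Va Vb}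

local notation "G" => GapFuns Vb E
local notation "NV" => (List (GapFuns Vb E) × Va)

/-- visibility of an ancestor `ηa` in the frame at `η` -/
def Vis (k : ℕ) (ηa η : List (GapFuns Vb E)) : Prop :=
  ηa <+: η ∧ η.length - ηa.length + 1 ≤ nsize k η

/-- index of the term for a node variable at ancestor `ηa` in the frame at `η` -/
def tIdx (k : ℕ) (ηa η : List (GapFuns Vb E)) : ℕ :=
  nsize k η - 1 - (η.length - ηa.length)

def VRel (k : ℕ) (T : List (GapFuns Vb E) → FrameData Va Vb)
    (u v : NV) (ν : List (GapFuns Vb E)) : Prop :=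
  (T ν).1 (tIdx k u.1 ν, u.2) (tIdx k v.1 ν, v.2)

lemma Vis.one_le_nsize {ηa η : List G} (h : Vis k ηa η) : 1 ≤ nsize k η :=
  le_trans (Nat.le_add_left 1 _) h.2

lemma Vis.tIdx_lt {ηa η : List G} (h : Vis k ηa η) : tIdx k ηa η < nsize k η := by
  have h1 := h.one_le_nsize
  unfold tIdx
  omega

lemma vis_self {η : List G} (h : 1 ≤ nsize k η) : Vis k η η :=
  ⟨List.prefix_refl η, by simp; omega⟩

lemma tIdx_self (η : List G) : tIdx k η η = nsize k η - 1 := by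
  unfold tIdx; simp

/-- one-step transport of `VRel` between a node and its parent -/
lemma step_agree (hT : StrategyTree E k T) (η : List G) (g : G) (u v : NV)
    (hu : Vis k u.1 (η ++ [g])) (hv : Vis k v.1 (η ++ [g]))
    (hu' : u.1 <+: η) (hv' : v.1 <+: η) :
    (VRel k T u v η ↔ VRel k T u v (η ++ [g])) ∧ Vis k u.1 η ∧ Vis k v.1 η := by
  have hlen : (η ++ [g]).length = η.length + 1 := by simp
  have hstep := ((hT η).2 g).1
  have hns : nsize k η ≤ k + 1 := min_le_right _ _
  have hnsl : nsize k η ≤ η.length := min_le_left _ _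
  have hule : u.1.length ≤ η.length := hu'.length_le
  have hvle : v.1.length ≤ η.length := hv'.length_le
  have hdu := hu.2
  have hdv := hv.2
  rw [hlen] at hdu hdv
  by_cases hs : nsize k η < k + 1
  · -- growing phase
    have hseq : nsize k η = η.length := by unfold nsize at hs ⊢; omega
    have hle : η.length + 1 ≤ k + 1 := by unfold nsize at hs; omega
    have hseq' : nsize k (η ++ [g]) = η.length + 1 := by
      unfold nsize; rw [hlen]; omega
    rw [OneStepT, if_pos hs] at hstep
    have hviu : Vis k u.1 η := ⟨hu', by omega⟩
    have hviv : Vis k v.1 η := ⟨hv', by omega⟩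
    refine ⟨?_, hviu, hviv⟩
    have hiu : tIdx k u.1 (η ++ [g]) = tIdx k u.1 η := by
      unfold tIdx; rw [hlen, hseq, hseq']; omega
    have hiv : tIdx k v.1 (η ++ [g]) = tIdx k v.1 η := by
      unfold tIdx; rw [hlen, hseq, hseq']; omega
    have := hstep.1 (tIdx k u.1 η, u.2) (tIdx k v.1 η, v.2)
      (by simpa [hseq] using hviu.tIdx_lt) (by simpa [hseq] using hviv.tIdx_lt)
    unfold VRel
    rw [hiu, hiv]
    exact this
  · -- shifting phase
    have hseq : nsize k η = k + 1 := by omega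
    have hetak : k + 1 ≤ η.length := by unfold nsize at hseq; omega
    have hseq' : nsize k (η ++ [g]) = k + 1 := by
      unfold nsize; rw [hlen]; omega
    rw [OneStepT, if_neg hs] at hstep
    have hduk : (η.length + 1 - u.1.length) + 1 ≤ k + 1 := by omega
    have hdvk : (η.length + 1 - v.1.length) + 1 ≤ k + 1 := by omega
    have hviu : Vis k u.1 η := ⟨hu', by omega⟩
    have hviv : Vis k v.1 η := ⟨hv', by omega⟩
    refine ⟨?_, hviu, hviv⟩
    have hiu : tIdx k u.1 (η ++ [g]) + 1 = tIdx k u.1 η := by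
      unfold tIdx; rw [hlen, hseq, hseq']; omega
    have hiv : tIdx k v.1 (η ++ [g]) + 1 = tIdx k v.1 η := by
      unfold tIdx; rw [hlen, hseq, hseq']; omega
    have hbu : tIdx k u.1 (η ++ [g]) + 1 < k + 1 := by
      have := hviu.tIdx_lt; omega
    have hbv : tIdx k v.1 (η ++ [g]) + 1 < k + 1 := by
      have := hviv.tIdx_lt; omega
    have h2 := hstep.1 (tIdx k u.1 (η ++ [g]), u.2) (tIdx k v.1 (η ++ [g]), v.2) hbu hbv
    simp only [] at h2
    unfold VRel
    rw [← hiu, ← hiv]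
    exact h2

/-- transport of `VRel` from a node `ν₀` to any descendant in which both variables
are visible -/
lemma transport (hT : StrategyTree E k T) (u v : NV) (ν₀ : List G) (ext : List G)
    (hu0 : u.1 <+: ν₀) (hv0 : v.1 <+: ν₀)
    (hu : Vis k u.1 (ν₀ ++ ext)) (hv : Vis k v.1 (ν₀ ++ ext)) :
    (VRel k T u v ν₀ ↔ VRel k T u v (ν₀ ++ ext)) ∧ Vis k u.1 ν₀ ∧ Vis k v.1 ν₀ := by
  induction ext using List.reverseRecOn with
  | nil =>
    rw [List.append_nil] at hu hv ⊢
    exact ⟨Iff.rfl, hu, hv⟩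
  | append_singleton ext' g ih =>
    rw [← List.append_assoc] at hu hv
    have hu' : u.1 <+: ν₀ ++ ext' := hu0.trans (List.prefix_append _ _)
    have hv' : v.1 <+: ν₀ ++ ext' := hv0.trans (List.prefix_append _ _)
    have hstep := step_agree hT (ν₀ ++ ext') g u v hu hv hu' hv'
    have hih := ih hstep.2.1 hstep.2.2
    rw [← List.append_assoc]
    exact ⟨hih.1.trans hstep.1, hih.2⟩

/-- strict relation at a node -/
def SLT (k : ℕ) (T : List (GapFuns Vb E) → FrameData Va Vb)
    (u v : NV) (ν : List (GapFuns Vb E)) : Prop :=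
  VRel k T u v ν ∧ ¬ VRel k T v u ν

lemma sqle_iff_left (u v : NV) (hpre : u.1 <+: v.1) :
    sqle k T u v ↔ Vis k u.1 v.1 ∧ VRel k T u v v.1 := by
  simp only [sqle, Vis, VRel, tIdx, Nat.sub_self, Nat.sub_zero]
  constructor
  · rintro (⟨h1, h2, h3⟩ | ⟨h1, h2, h3⟩)
    · exact ⟨⟨h1, h2⟩, h3⟩
    · have heq : u.1 = v.1 := hpre.eq_of_length
        (le_antisymm hpre.length_le h1.length_le)
      rw [heq] at h2 h3 ⊢
      simp only [Nat.sub_self, Nat.sub_zero] at h3 ⊢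
      exact ⟨⟨List.prefix_refl _, by simpa using h2⟩, h3⟩
  · rintro ⟨⟨h1, h2⟩, h3⟩
    exact Or.inl ⟨h1, h2, h3⟩

lemma sqle_iff_right (u v : NV) (hpre : v.1 <+: u.1) :
    sqle k T u v ↔ Vis k v.1 u.1 ∧ VRel k T u v u.1 := by
  simp only [sqle, Vis, VRel, tIdx, Nat.sub_self, Nat.sub_zero]
  constructor
  · rintro (⟨h1, h2, h3⟩ | ⟨h1, h2, h3⟩)
    · have heq : u.1 = v.1 := h1.eq_of_length
        (le_antisymm h1.length_le hpre.length_le)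
      rw [heq] at h2 h3 ⊢
      simp only [Nat.sub_self, Nat.sub_zero] at h3 ⊢
      exact ⟨⟨List.prefix_refl _, by simpa using h2⟩, h3⟩
    · exact ⟨⟨h1, h2⟩, h3⟩
  · rintro ⟨⟨h1, h2⟩, h3⟩
    exact Or.inr ⟨h1, h2, h3⟩

lemma sqlt_iff_left (u v : NV) (hpre : u.1 <+: v.1) :
    sqlt k T u v ↔ Vis k u.1 v.1 ∧ SLT k T u v v.1 := by
  rw [sqlt, sqle_iff_left u v hpre, sqle_iff_right v u hpre, SLT]
  constructor
  · rintro ⟨⟨h1, h2⟩, h3⟩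
    exact ⟨h1, h2, fun hh => h3 ⟨h1, hh⟩⟩
  · rintro ⟨h1, h2, h3⟩
    exact ⟨⟨h1, h2⟩, fun hh => h3 hh.2⟩

lemma sqlt_comparable {u v : NV} (h : sqlt k T u v) : u.1 <+: v.1 ∨ v.1 <+: u.1 := by
  rcases h.1 with ⟨h1, -⟩ | ⟨h1, -⟩
  · exact Or.inl h1
  · exact Or.inr h1

lemma sqlt_irrefl' (u : NV) : ¬ sqlt k T u u := fun h => h.2 h.1

lemma sqlt_asymm' {u v : NV} (h1 : sqlt k T u v) (h2 : sqlt k T v u) : False :=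
  h1.2 h2.1

lemma sqlt_iff_right (u v : NV) (hpre : v.1 <+: u.1) :
    sqlt k T u v ↔ Vis k v.1 u.1 ∧ SLT k T u v u.1 := by
  rw [sqlt, sqle_iff_right u v hpre, sqle_iff_left v u hpre, SLT]
  constructor
  · rintro ⟨⟨h1, h2⟩, h3⟩
    exact ⟨h1, h2, fun hh => h3 ⟨h1, hh⟩⟩
  · rintro ⟨h1, h2, h3⟩
    exact ⟨⟨h1, h2⟩, fun hh => h3 hh.2⟩

/-- composition of strict steps at a peak node -/
lemma sqlt_compose (hT : StrategyTree E k T) {u v w : NV}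
    (h1 : sqlt k T u v) (h2 : sqlt k T v w)
    (hu : u.1 <+: v.1) (hw : w.1 <+: v.1) : sqlt k T u w := by
  obtain ⟨hVu, huv, hnvu⟩ := (sqlt_iff_left u v hu).1 h1
  obtain ⟨hVw, hvw, hnwv⟩ := (sqlt_iff_right v w hw).1 h2
  have htrans := ((hT v.1).1).2.1
  have hiu := hVu.tIdx_lt
  have hiw := hVw.tIdx_lt
  have hiv : tIdx k v.1 v.1 < nsize k v.1 := by
    rw [tIdx_self]; have := hVu.one_le_nsize; omega
  have huw : VRel k T u w v.1 :=
    htrans (tIdx k u.1 v.1, u.2) (tIdx k v.1 v.1, v.2) (tIdx k w.1 v.1, w.2)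
      hiu hiv hiw huv hvw
  have hnwu : ¬ VRel k T w u v.1 := fun hwu =>
    hnwv (htrans (tIdx k w.1 v.1, w.2) (tIdx k u.1 v.1, u.2) (tIdx k v.1 v.1, v.2)
      hiw hiu hiv hwu huv)
  rcases List.prefix_or_prefix_of_prefix hu hw with hcase | hcase
  · -- base is w.1
    obtain ⟨ext, hext⟩ := hw
    rw [← hext] at hVu hVw huw hnwu
    have ht1 := transport hT u w w.1 ext hcase (List.prefix_refl _) hVu hVw
    have ht2 := transport hT w u w.1 ext (List.prefix_refl _) hcase hVw hVu
    rw [sqlt_iff_left u w hcase]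
    exact ⟨ht1.2.1, ht1.1.mpr huw, fun hh => hnwu (ht2.1.mp hh)⟩
  · -- base is u.1
    obtain ⟨ext, hext⟩ := hu
    rw [← hext] at hVu hVw huw hnwu
    have ht1 := transport hT u w u.1 ext (List.prefix_refl _) hcase hVu hVw
    have ht2 := transport hT w u u.1 ext hcase (List.prefix_refl _) hVw hVu
    rw [sqlt_iff_right u w hcase]
    exact ⟨ht1.2.2, ht1.1.mpr huw, fun hh => hnwu (ht2.1.mp hh)⟩

lemma sqlt_pre_of_le {u v : NV} (h : sqlt k T u v) (hlen : u.1.length ≤ v.1.length) :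
    u.1 <+: v.1 := by
  rcases sqlt_comparable h with hc | hc
  · exact hc
  · rw [hc.eq_of_length (le_antisymm hc.length_le hlen)]

lemma sqlt_pre_of_le' {u v : NV} (h : sqlt k T u v) (hlen : v.1.length ≤ u.1.length) :
    v.1 <+: u.1 := by
  rcases sqlt_comparable h with hc | hc
  · rw [hc.eq_of_length (le_antisymm hc.length_le hlen)]
  · exact hc

end Aux

section Cycle

lemma chain_of_transGen {α : Type*} {r : α → α → Prop} {a b : α}
    (h : Relation.TransGen r a b) : ∃ l, List.Chain r a (l ++ [b]) := by
  induction h with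
  | single h => exact ⟨[], List.Chain.cons h List.Chain.nil⟩
  | @tail b c _ hbc ih =>
    obtain ⟨l, hl⟩ := ih
    refine ⟨l ++ [b], ?_⟩
    rw [List.append_assoc, List.singleton_append]
    exact (List.isChain_cons_split).2 ⟨hl, List.Chain.cons hbc List.Chain.nil⟩

lemma cycle_rotate {α : Type*} {r : α → α → Prop} {c x : α} {l : List α}
    (h : List.Chain r c ((x :: l) ++ [c])) : List.Chain r x ((l ++ [c]) ++ [x]) := by
  rw [List.cons_append] at h
  simp only [List.Chain] at h
  rw [List.chain_cons] at h
  rw [List.append_assoc, List.singleton_append]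
  exact (List.isChain_cons_split).2 ⟨h.2, List.Chain.cons h.1 List.Chain.nil⟩

lemma exists_max_idx {α : Type*} (f : α → ℕ) :
    ∀ l : List α, l ≠ [] → ∃ i : ℕ, ∃ hi : i < l.length, ∀ e ∈ l, f e ≤ f (l[i]'hi)
  | [], h => absurd rfl h
  | a :: t, _ => by
    rcases eq_or_ne t [] with rfl | ht
    · exact ⟨0, by simp, by simp⟩
    · obtain ⟨i, hi, hmax⟩ := exists_max_idx f t ht
      by_cases hc : f a ≤ f (t[i]'hi)
      · refine ⟨i + 1, by simpa using Nat.succ_lt_succ hi, ?_⟩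
        intro e he
        rw [List.getElem_cons_succ]
        rcases List.mem_cons.1 he with rfl | he
        · exact hc
        · exact hmax e he
      · refine ⟨0, by simp, ?_⟩
        intro e he
        rcases List.mem_cons.1 he with rfl | he
        · simp
        · exact le_trans (hmax e he) (le_of_not_ge hc)

end Cycle

section Main

variable {Va Vb : Type} [Fintype Vb] {E : Finset Vb} {k : ℕ}
  {T : List (GapFuns Vb E) → FrameData Va Vb}

local notation "NV" => (List (GapFuns Vb E) × Va)

lemma no_cycle (hT : StrategyTree E k T) :
    ∀ n : ℕ, ∀ (c : NV) (l : List NV), l.length + 1 = n →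
      List.Chain (sqlt k T) c (l ++ [c]) → False := by
  intro n
  induction n using Nat.strong_induction_on with
  | _ n IH =>
    have inner : ∀ i : ℕ, ∀ (c : NV) (l : List NV), l.length + 1 = n →
        List.Chain (sqlt k T) c (l ++ [c]) →
        ∀ hi : i < l.length,
        (∀ e ∈ c :: l, e.1.length ≤ (l[i]'hi).1.length) → False := by
      intro i
      induction i with
      | zero =>
        rintro c (_ | ⟨x, t⟩) hn hch hi hmax
        · exact absurd hi (by simp)
        rw [List.cons_append] at hch
        simp only [List.Chain] at hch
        rw [List.chain_cons] at hch
        obtain ⟨hcx, hch2⟩ := hch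
        simp only [List.getElem_cons_zero] at hmax
        match t, hch2 with
        | [], hch2 =>
          rw [List.nil_append, List.chain_cons] at hch2
          exact hcx.2 hch2.1.1
        | y :: t', hch2 =>
          rw [List.cons_append, List.chain_cons] at hch2
          obtain ⟨hxy, hch3⟩ := hch2
          have hcpre : c.1 <+: x.1 :=
            sqlt_pre_of_le hcx (hmax c (by simp))
          have hypre : y.1 <+: x.1 :=
            sqlt_pre_of_le' hxy (hmax y (by simp))
          have hcy : sqlt k T c y := sqlt_compose hT hcx hxy hcpre hypre
          exact IH (n - 1) (by omega) c (y :: t') (by simp at hn ⊢; omega)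
            (by rw [List.cons_append]; simp only [List.Chain]; rw [List.chain_cons]; exact ⟨hcy, hch3⟩)
      | succ i ih =>
        rintro c (_ | ⟨x, t⟩) hn hch hi hmax
        · exact absurd hi (by simp)
        have hrot := cycle_rotate hch
        have hi' : i < (t ++ [c]).length := by
          simp only [List.length_cons] at hi
          simp only [List.length_append, List.length_cons, List.length_nil]
          omega
        refine ih x (t ++ [c]) (by simp at hn ⊢; omega) hrot hi' ?_
        have hget : (t ++ [c])[i]'hi' = (x :: t)[i + 1]'hi := by
          rw [List.getElem_cons_succ]
          exact List.getElem_append_left (by simp only [List.length_cons] at hi; omega)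
        rw [hget]
        intro e he
        refine hmax e ?_
        simp only [List.mem_cons, List.mem_append, List.mem_singleton] at he ⊢
        tauto
    intro c l hn hch
    rcases l with _ | ⟨x, t⟩
    · rw [List.nil_append] at hch
      simp only [List.Chain] at hch
      rw [List.chain_cons] at hch
      exact sqlt_irrefl' c hch.1
    obtain ⟨j, hj, hmax⟩ := exists_max_idx (fun e => e.1.length) (c :: x :: t) (by simp)
    cases j with
    | zero =>
      -- max is c; rotate once, c goes to the last position of the new list
      have hrot := cycle_rotate hch
      have hi' : t.length < (t ++ [c]).length := by simp
      refine inner t.length x (t ++ [c]) (by simp at hn ⊢; omega) hrot hi' ?_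
      have hget : (t ++ [c])[t.length]'hi' = c := by
        rw [List.getElem_append_right (le_refl _)]
        simp
      rw [hget]
      simp only [List.getElem_cons_zero] at hmax
      intro e he
      refine hmax e ?_
      simp only [List.mem_cons, List.mem_append, List.mem_singleton] at he ⊢
      tauto
    | succ j' =>
      have hj' : j' < (x :: t).length := by
        simp only [List.length_cons] at hj ⊢; omega
      refine inner j' c (x :: t) hn hch hj' ?_
      intro e he
      have := hmax e he
      rwa [List.getElem_cons_succ] at this

end Main

/-- for every strategy tree `T`, the relation `⊏⁺_T` on node variables is
transitive and irreflexive; in particular there is no node variable `(η, x)` with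
`(η, x) ⊏⁺_T (η, x)`. -/
theorem stmt11 {Va Vb : Type} [Fintype Vb] {E : Finset Vb} (k : ℕ)
    (T : List (GapFuns Vb E) → FrameData Va Vb) (hT : StrategyTree E k T) :
    Transitive (Relation.TransGen (sqlt k T)) ∧
    Irreflexive (Relation.TransGen (sqlt k T)) := by
  refine ⟨fun a b c hab hbc => hab.trans hbc, ?_⟩
  intro u hu
  obtain ⟨l, hl⟩ := chain_of_transGen hu
  exact no_cycle hT (l.length + 1) u l rfl hl
end
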